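/- arXiv:2605.17105 — 7 statements merged into one kernel-verified Lean document; each statement's English description precedes it below -/
import Mathlib

section
/- Fix positive integers m and n. Define ρ(x) = ((m+n)!/(πⁿ m!)) · (1 + e^{2x₁} + ⋯ + e^{2xₙ})^{-(m+n+1)} for x ∈ ℝⁿ. Then for every multi-index α ∈ ℕⁿ with |α| ≤ m, ∫_{ℝⁿ} ρ(x) e^{2⟨α+𝟏,x⟩} dx = (1/(2π)ⁿ) · α!(m−|α|)!/m!. -/
open MeasureTheory Real intervalIntegral


lemma betaNat : ∀ (b a : ℕ), ∫ x in (0:ℝ)..1, x ^ a * (1 - x) ^ b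
    = (a.factorial : ℝ) * b.factorial / (a + b + 1).factorial := by
  intro b
  induction b with
  | zero =>
    intro a
    simp [integral_pow]
    rw [Nat.factorial_succ]
    push_cast
    field_simp
  | succ b ih =>
    intro a
    have hu : ∀ x ∈ Set.uIcc (0:ℝ) 1, HasDerivAt (fun x : ℝ => (1 - x) ^ (b+1))
        (-(((b:ℝ)+1) * (1 - x) ^ b)) x := by
      intro x _
      have h1 : HasDerivAt (fun x : ℝ => 1 - x) (-1) x := by
        exact (hasDerivAt_id' x).const_sub (1:ℝ)
      have := h1.pow (b+1)
      refine this.congr_deriv ?_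
      push_cast
      ring
    have hv : ∀ x ∈ Set.uIcc (0:ℝ) 1, HasDerivAt (fun x : ℝ => x ^ (a+1) / ((a:ℝ)+1))
        (x ^ a) x := by
      intro x _
      have := (hasDerivAt_pow (a+1) x).div_const ((a:ℝ)+1)
      refine this.congr_deriv ?_
      have h : ((a:ℝ)+1) ≠ 0 := by positivity
      push_cast
      field_simp
    have hIBP := integral_mul_deriv_eq_deriv_mul hu hv
      (by apply Continuous.intervalIntegrable; continuity)
      (by apply Continuous.intervalIntegrable; continuity)
    have hcomm : ∫ x in (0:ℝ)..1, x ^ a * (1 - x) ^ (b+1)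
        = ∫ x in (0:ℝ)..1, (1 - x) ^ (b+1) * x ^ a := by
      congr 1; ext x; ring
    have hpull : ∫ x in (0:ℝ)..1, -(((b:ℝ)+1) * (1 - x) ^ b) * (x ^ (a+1) / ((a:ℝ)+1))
        = (-(((b:ℝ)+1) / ((a:ℝ)+1))) * ∫ x in (0:ℝ)..1, x ^ (a+1) * (1 - x) ^ b := by
      rw [← intervalIntegral.integral_const_mul]
      congr 1; ext x; ring
    rw [hcomm, hIBP, hpull, ih (a+1)]
    have ha : ((a:ℝ)+1) ≠ 0 := by positivity
    have h2 : ((a+b+2).factorial : ℝ) ≠ 0 := by positivity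
    have e1 : a + 1 + b + 1 = a + b + 2 := by omega
    have e2 : a + (b+1) + 1 = a + b + 2 := by omega
    rw [e1, e2]
    rw [Nat.factorial_succ a, Nat.factorial_succ b]
    push_cast
    field_simp
    ring

section
variable (c : ℝ) (hc : 0 < c) (k p : ℕ)

lemma keyB (c : ℝ) (hc : 0 < c) (k p : ℕ) (hkp : k + 2 ≤ p) :
    Integrable (fun x : ℝ => Real.exp (2*((k:ℝ)+1)*x) / (c + Real.exp (2*x))^p) ∧
    ∫ x : ℝ, Real.exp (2*((k:ℝ)+1)*x) / (c + Real.exp (2*x))^p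
      = ((k.factorial : ℝ) * (p-k-2).factorial) / (2 * (p-1).factorial * c^(p-k-1)) := by
  set φ : ℝ → ℝ := fun x => Real.exp (2*x) / (c + Real.exp (2*x)) with hφ
  set φ' : ℝ → ℝ := fun x => 2*c*Real.exp (2*x) / (c + Real.exp (2*x))^2 with hφ'
  have hE : ∀ x : ℝ, 0 < Real.exp (2*x) := fun x => Real.exp_pos _
  have hD : ∀ x : ℝ, 0 < c + Real.exp (2*x) := fun x => by positivity
  have hderiv : ∀ x : ℝ, HasDerivAt φ (φ' x) x := by
    intro x
    have h1 : HasDerivAt (fun x : ℝ => Real.exp (2*x)) (Real.exp (2*x) * 2) x := by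
      have := ((hasDerivAt_id x).const_mul 2).exp
      simpa using this
    have h2 : HasDerivAt (fun x : ℝ => c + Real.exp (2*x)) (Real.exp (2*x) * 2) x := by
      have := h1.const_add c
      simpa using this
    have := h1.div h2 (ne_of_gt (hD x))
    refine this.congr_deriv ?_
    have := (hD x).ne'
    simp only [hφ']
    field_simp [hφ']
    ring
  have hmono : StrictMono φ := by
    intro a b hab
    have hEab : Real.exp (2*a) < Real.exp (2*b) := by
      apply Real.exp_lt_exp.2; linarith
    rw [hφ]
    simp only
    rw [div_lt_div_iff₀ (hD a) (hD b)]
    nlinarith [hE a, hE b]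
  have hinj : Set.InjOn φ Set.univ := fun a _ b _ h => hmono.injective h
  have hrange : Set.range φ = Set.Ioo 0 1 := by
    ext u
    constructor
    · rintro ⟨x, rfl⟩
      constructor
      · exact div_pos (hE x) (hD x)
      · rw [div_lt_one (hD x)]; linarith [hE x, hc]
    · rintro ⟨hu0, hu1⟩
      refine ⟨(1/2) * Real.log (c * u / (1 - u)), ?_⟩
      have h1u : 0 < 1 - u := by linarith
      have harg : 0 < c * u / (1 - u) := by positivity
      have : Real.exp (2 * ((1/2) * Real.log (c * u / (1 - u)))) = c * u / (1 - u) := by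
        rw [show 2 * ((1/2) * Real.log (c * u / (1 - u))) = Real.log (c * u / (1 - u)) by ring]
        exact Real.exp_log harg
      rw [hφ]; simp only; rw [this]
      rw [div_eq_iff (by positivity : (c + c * u / (1-u)) ≠ 0)]
      field_simp
      ring
  have himg : φ '' Set.univ = Set.Ioo 0 1 := by rw [Set.image_univ]; exact hrange
  have hderivW : ∀ x ∈ (Set.univ : Set ℝ), HasDerivWithinAt φ (φ' x) Set.univ x :=
    fun x _ => (hderiv x).hasDerivWithinAt
  set g : ℝ → ℝ := fun u => u ^ k * (1 - u) ^ (p - k - 2) with hg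
  have key : ∀ x : ℝ, |φ' x| * g (φ x)
      = (2 * c^(p-k-1)) * (Real.exp (2*((k:ℝ)+1)*x) / (c + Real.exp (2*x))^p) := by
    intro x
    have hDx := hD x
    have hEx := hE x
    have habs : |φ' x| = φ' x := abs_of_pos (by rw [hφ']; positivity)
    rw [habs]
    have h1φ : 1 - φ x = c / (c + Real.exp (2*x)) := by
      rw [hφ]; field_simp; ring
    have hexp : Real.exp (2*((k:ℝ)+1)*x) = Real.exp (2*x) ^ (k+1) := by
      rw [← Real.exp_nat_mul]
      congr 1
      push_cast
      ring
    rw [hg]; simp only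
    rw [h1φ, hexp, hφ, hφ']
    simp only
    rw [div_pow, div_pow]
    have hpowD : (c + Real.exp (2*x))^p
        = (c + Real.exp (2*x))^2 * (c + Real.exp (2*x))^k * (c + Real.exp (2*x))^(p-k-2) := by
      rw [← pow_add, ← pow_add]
      congr 1
      omega
    have hpowc : c^(p-k-1) = c * c^(p-k-2) := by
      rw [← pow_succ']
      congr 1
      omega
    rw [hpowD, hpowc]
    have h2 : (c + Real.exp (2*x)) ≠ 0 := hDx.ne'
    field_simp
    ring
  have hCne : (2 * c^(p-k-1)) ≠ 0 := by positivity
  have hbeta : ∫ u in Set.Ioo (0:ℝ) 1, g u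
      = ((k.factorial : ℝ) * (p-k-2).factorial) / ((p-1).factorial) := by
    rw [← MeasureTheory.integral_Ioc_eq_integral_Ioo,
      ← intervalIntegral.integral_of_le (by norm_num : (0:ℝ) ≤ 1)]
    rw [hg]
    simp only
    rw [betaNat]
    have : k + (p - k - 2) + 1 = p - 1 := by omega
    rw [this]
  have hCOV := integral_image_eq_integral_abs_deriv_smul MeasurableSet.univ hderivW hinj g
  rw [himg] at hCOV
  simp only [smul_eq_mul, key] at hCOV
  rw [MeasureTheory.setIntegral_univ, MeasureTheory.integral_const_mul] at hCOV
  have hval : ∫ x : ℝ, Real.exp (2*((k:ℝ)+1)*x) / (c + Real.exp (2*x))^p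
      = ((k.factorial : ℝ) * (p-k-2).factorial) / (2 * (p-1).factorial * c^(p-k-1)) := by
    rw [hbeta] at hCOV
    have hfp : ((p-1).factorial : ℝ) ≠ 0 := by positivity
    field_simp at hCOV ⊢
    linarith [hCOV]
  refine ⟨?_, hval⟩
  · have hInt : IntegrableOn g (Set.Ioo 0 1) := by
      apply (Continuous.integrableOn_Icc (by rw [hg]; continuity)).mono_set
      exact Set.Ioo_subset_Icc_self
    rw [← himg,
      integrableOn_image_iff_integrableOn_abs_deriv_smul MeasurableSet.univ hderivW hinj g]
      at hInt
    simp only [smul_eq_mul, key] at hInt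
    rw [integrableOn_univ] at hInt
    have h := hInt.const_mul (2 * c^(p-k-1))⁻¹
    have heq : (fun x => (2 * c^(p-k-1))⁻¹ * (2 * c^(p-k-1) *
        (Real.exp (2*((k:ℝ)+1)*x) / (c + Real.exp (2*x))^p)))
        = fun x => Real.exp (2*((k:ℝ)+1)*x) / (c + Real.exp (2*x))^p := by
      ext x
      rw [← mul_assoc, inv_mul_cancel₀ hCne, one_mul]
    rwa [heq] at h

end
set_option maxHeartbeats 1000000 in
lemma keyC : ∀ (n : ℕ) (α : Fin n → ℕ) (p : ℕ) (c : ℝ), 0 < c → (∑ j, α j) + n + 1 ≤ p →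
    Integrable (fun x : Fin n → ℝ =>
      Real.exp (2 * ∑ j, ((α j : ℝ)+1) * x j) / (c + ∑ j, Real.exp (2 * x j)) ^ p)
    ∧ ∫ x : Fin n → ℝ,
        Real.exp (2 * ∑ j, ((α j:ℝ)+1) * x j) / (c + ∑ j, Real.exp (2 * x j)) ^ p
      = (∏ j, ((α j).factorial : ℝ)) * ((p - (∑ j, α j) - n - 1).factorial)
        / (2^n * ((p-1).factorial) * c ^ (p - (∑ j, α j) - n)) := by
  intro n
  induction n with
  | zero =>
    intro α p c hc hp
    have hpf : ((p-1).factorial : ℝ) ≠ 0 := by positivity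
    constructor
    · simp only [Finset.univ_eq_empty, Finset.sum_empty, mul_zero, Real.exp_zero]
      rw [volume_pi]
      apply integrable_const_iff.2
      right
      infer_instance
    · simp only [Finset.univ_eq_empty, Finset.sum_empty, Finset.prod_empty, mul_zero,
        Real.exp_zero, Nat.sub_zero]
      rw [volume_pi, MeasureTheory.integral_const]
      simp [Measure.pi_empty_univ]
      field_simp
      simp [Measure.real, Measure.pi_empty_univ]
  | succ n ih =>
    intro α p c hc hp
    set β : Fin n → ℕ := fun j => α j.succ with hβ
    set S' : ℕ := ∑ j, β j with hS'
    have hsum : ∑ j, α j = α 0 + S' := by rw [hS', hβ, Fin.sum_univ_succ]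
    set q : ℕ := p - S' - n with hq
    have hq2 : α 0 + 2 ≤ q := by omega
    have hS'p : S' + n + 1 ≤ p := by omega
    set F : ℝ × (Fin n → ℝ) → ℝ := fun z =>
      Real.exp (2 * ((α 0 : ℝ)+1) * z.1) *
        (Real.exp (2 * ∑ j, ((β j : ℝ)+1) * z.2 j) /
          ((c + Real.exp (2 * z.1)) + ∑ j, Real.exp (2 * z.2 j)) ^ p) with hF
    have hcomp : ∀ z : ℝ × (Fin n → ℝ),
        Real.exp (2 * ∑ j, ((α j : ℝ)+1) *
            ((MeasurableEquiv.piFinSuccAbove (fun _ : Fin (n+1) => ℝ) 0).symm z j)) /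
          (c + ∑ j, Real.exp
            (2 * (MeasurableEquiv.piFinSuccAbove (fun _ : Fin (n+1) => ℝ) 0).symm z j)) ^ p
          = F z := by
      intro z
      simp only [MeasurableEquiv.piFinSuccAbove_symm_apply, Fin.insertNthEquiv,
        Equiv.coe_fn_mk, Fin.insertNth_zero, Fin.sum_univ_succ, Fin.cons_zero, Fin.cons_succ,
        Fin.zero_succAbove, cast_eq]
      rw [hF]
      simp only
      rw [mul_add, Real.exp_add, ← add_assoc]
      simp only [hβ, add_mul, one_mul]
      ring_nf
    -- inner integrals
    have hct : ∀ t : ℝ, (0:ℝ) < c + Real.exp (2*t) := fun t => by positivity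
    have hIH := fun t : ℝ => ih β p (c + Real.exp (2*t)) (hct t) hS'p
    set Kβ : ℝ := (∏ j, ((β j).factorial : ℝ)) * ((p - S' - n - 1).factorial)
        / (2^n * ((p-1).factorial)) with hKβ
    have hInner : ∀ t : ℝ, ∫ y : Fin n → ℝ, F (t, y)
        = Kβ * (Real.exp (2*((α 0 : ℝ)+1)*t) / (c + Real.exp (2*t)) ^ q) := by
      intro t
      rw [hF]
      simp only
      rw [MeasureTheory.integral_const_mul, (hIH t).2]
      rw [hKβ]
      have h1 : ((2:ℝ)^n * ((p-1).factorial)) ≠ 0 := by positivity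
      have h2 : (c + Real.exp (2*t)) ^ (p - S' - n) ≠ 0 := by positivity
      rw [← hq]
      field_simp
    have hInnerInt : ∀ t : ℝ, Integrable (fun y : Fin n → ℝ => F (t, y)) := by
      intro t
      rw [hF]
      simp only
      exact ((hIH t).1).const_mul _
    have hB := keyB c hc (α 0) q hq2
    have hFnn : ∀ z, 0 ≤ F z := by
      intro z
      rw [hF]
      have := hct z.1
      positivity
    have hFcont : Continuous F := by
      rw [hF]
      have hc1 : Continuous fun z : ℝ × (Fin n → ℝ) =>
          Real.exp (2 * ((α 0 : ℝ)+1) * z.1) :=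
        Real.continuous_exp.comp (continuous_const.mul continuous_fst)
      have hc2 : Continuous fun z : ℝ × (Fin n → ℝ) =>
          Real.exp (2 * ∑ j, ((β j : ℝ)+1) * z.2 j) :=
        Real.continuous_exp.comp (continuous_const.mul (continuous_finset_sum _
          fun j _ => continuous_const.mul ((continuous_apply j).comp continuous_snd)))
      have hc3 : Continuous fun z : ℝ × (Fin n → ℝ) =>
          ((c + Real.exp (2 * z.1)) + ∑ j, Real.exp (2 * z.2 j)) ^ p :=
        ((continuous_const.add (Real.continuous_exp.comp
            (continuous_const.mul continuous_fst))).add (continuous_finset_sum _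
          fun j _ => Real.continuous_exp.comp
            (continuous_const.mul ((continuous_apply j).comp continuous_snd)))).pow p
      have hne : ∀ z : ℝ × (Fin n → ℝ),
          ((c + Real.exp (2 * z.1)) + ∑ j, Real.exp (2 * z.2 j)) ^ p ≠ 0 := by
        intro z
        have h1 := hct z.1
        have h2 : (0:ℝ) ≤ ∑ j, Real.exp (2 * z.2 j) :=
          Finset.sum_nonneg fun j _ => (Real.exp_pos _).le
        positivity
      exact hc1.mul ((hc2.div hc3 hne))
    have hFint : Integrable F ((volume : Measure ℝ).prod (volume : Measure (Fin n → ℝ))) := by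
      apply (integrable_prod_iff (hFcont.aestronglyMeasurable)).2
      constructor
      · exact Filter.Eventually.of_forall hInnerInt
      · have : ∀ t : ℝ, (∫ y : Fin n → ℝ, ‖F (t, y)‖) = ∫ y : Fin n → ℝ, F (t, y) := by
          intro t
          congr 1
          ext y
          exact Real.norm_of_nonneg (hFnn _)
        simp_rw [this, hInner]
        exact hB.1.const_mul _
      
    have hprodval : ∫ z : ℝ × (Fin n → ℝ), F z
          ∂((volume : Measure ℝ).prod (volume : Measure (Fin n → ℝ)))
        = Kβ * (((α 0).factorial : ℝ) * (q - α 0 - 2).factorial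
            / (2 * (q-1).factorial * c ^ (q - α 0 - 1))) := by
      rw [MeasureTheory.integral_prod _ hFint]
      simp_rw [hInner]
      rw [MeasureTheory.integral_const_mul, hB.2]
    -- transfer to pi
    have mp := (measurePreserving_piFinSuccAbove (fun _ : Fin (n+1) => (volume : Measure ℝ)) 0).symm
    constructor
    · rw [volume_pi, ← mp.integrable_comp_emb (MeasurableEquiv.measurableEmbedding _)]
      have : ((fun x : Fin (n+1) → ℝ =>
          Real.exp (2 * ∑ j, ((α j : ℝ)+1) * x j) / (c + ∑ j, Real.exp (2 * x j)) ^ p)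
          ∘ (MeasurableEquiv.piFinSuccAbove (fun _ : Fin (n+1) => ℝ) 0).symm) = F := by
        ext z
        exact hcomp z
      rw [this]
      rw [← volume_pi]
      exact hFint
    · rw [volume_pi, ← mp.integral_comp']
      rw [← volume_pi]
      simp only [hcomp]
      rw [hprodval, hKβ]
      rw [Fin.prod_univ_succ]
      have e1 : q - 1 = p - S' - n - 1 := by omega
      have e2 : q - α 0 - 2 = p - (∑ j, α j) - (n+1) - 1 := by omega
      have e3 : q - α 0 - 1 = p - (∑ j, α j) - (n+1) := by omega
      rw [e1, e2, e3]
      have h1 : ((2:ℝ)^n * ((p-1).factorial)) ≠ 0 := by positivity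
      have h2 : ((p - S' - n - 1).factorial : ℝ) ≠ 0 := by positivity
      have h3 : (c : ℝ) ^ (p - (∑ j, α j) - (n+1)) ≠ 0 := by positivity
      rw [pow_succ]
      field_simp
      ring

/-- With `ρ(x) = ((m+n)!/(πⁿ m!)) (1 + Σⱼ e^{2xⱼ})^{-(m+n+1)}`, for every
multi-index `α ∈ ℕⁿ` with `|α| ≤ m`,
`∫_{ℝⁿ} ρ(x) e^{2⟨α+𝟏,x⟩} dx = (2π)^{-n} α! (m−|α|)!/m!`. -/
theorem stmt2 (m n : ℕ) (hm : 0 < m) (hn : 0 < n)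
    (α : Fin n → ℕ) (hα : ∑ j, α j ≤ m) :
    (∫ x : Fin n → ℝ,
      (((m + n).factorial : ℝ) / (π ^ n * (m.factorial : ℝ)) /
          (1 + ∑ j, Real.exp (2 * x j)) ^ (m + n + 1)) *
        Real.exp (2 * ∑ j, ((α j : ℝ) + 1) * x j))
    = (1 / (2 * π) ^ n) *
        ((∏ j, ((α j).factorial : ℝ)) * ((m - ∑ j, α j).factorial : ℝ)
          / (m.factorial : ℝ)) := by
  have hkey := keyC n α (m + n + 1) 1 one_pos (by omega)
  have heq : (fun x : Fin n → ℝ =>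
      (((m + n).factorial : ℝ) / (π ^ n * (m.factorial : ℝ)) /
          (1 + ∑ j, Real.exp (2 * x j)) ^ (m + n + 1)) *
        Real.exp (2 * ∑ j, ((α j : ℝ) + 1) * x j))
      = fun x : Fin n → ℝ => (((m + n).factorial : ℝ) / (π ^ n * (m.factorial : ℝ))) *
        (Real.exp (2 * ∑ j, ((α j : ℝ) + 1) * x j) /
          ((1:ℝ) + ∑ j, Real.exp (2 * x j)) ^ (m + n + 1)) := by
    ext x
    ring
  rw [heq, MeasureTheory.integral_const_mul, hkey.2]
  have e1 : m + n + 1 - (∑ j, α j) - n - 1 = m - ∑ j, α j := by omega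
  have e2 : m + n + 1 - 1 = m + n := by omega
  rw [e1, e2, one_pow]
  have hpi : (π:ℝ) ≠ 0 := Real.pi_ne_zero
  have h1 : ((m+n).factorial : ℝ) ≠ 0 := by positivity
  have h2 : (m.factorial : ℝ) ≠ 0 := by positivity
  rw [mul_pow]
  field_simp
end

section
/- Fix positive integers m and n. Let 𝓘_m = {α ∈ ℕⁿ : |α| ≤ m}, N = #𝓘_m, and for x ∈ ℝⁿ let v(x) = (e^{2⟨α+𝟏,x⟩})_{α∈𝓘_m} ∈ ℝᴺ. Let A = (A_α)_{α∈𝓘_m} ∈ ℝᴺ with A_α = (1/(2π)ⁿ) · α!(m−|α|)!/m!, and let K_v = cone({v(x) : x ∈ ℝⁿ}) be the set of all finite sums Σᵢ aᵢ v(xᵢ) with aᵢ ≥ 0 and xᵢ ∈ ℝⁿ. Then A lies in the interior of K_v in ℝᴺ. -/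
open Real

/-- The index set `𝓘_m = {α ∈ ℕⁿ : |α| ≤ m}`. -/
def IndexSet (m n : ℕ) : Type := {α : Fin n → ℕ // ∑ j, α j ≤ m}

instance (m n : ℕ) : DecidableEq (IndexSet m n) :=
  fun a b => decidable_of_iff (a.1 = b.1) Subtype.ext_iff.symm

noncomputable instance (m n : ℕ) : Fintype (IndexSet m n) := by
  have hinj : Function.Injective
      (fun (α : IndexSet m n) (j : Fin n) => (⟨α.1 j, by
        have h1 : α.1 j ≤ ∑ j, α.1 j :=
          Finset.single_le_sum (f := fun j => α.1 j) (fun _ _ => Nat.zero_le _)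
            (Finset.mem_univ j)
        exact Nat.lt_succ_of_le (le_trans h1 α.2)⟩ : Fin (m+1))) := by
    intro a b hab
    apply Subtype.ext
    funext j
    exact congrArg Fin.val (congrFun hab j)
  have : Finite (IndexSet m n) := Finite.of_injective _ hinj
  exact Fintype.ofFinite _

lemma single_le (m n : ℕ) (α : IndexSet m n) (j : Fin n) : α.1 j ≤ m :=
  le_trans (Finset.single_le_sum (f := fun j => α.1 j) (fun _ _ => Nat.zero_le _)
    (Finset.mem_univ j)) α.2

lemma digit_inj (m : ℕ) : ∀ {n : ℕ} (a b : Fin n → ℕ), (∀ j, a j ≤ m) → (∀ j, b j ≤ m) →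
    (∑ j, a j * (m+1)^(j : ℕ)) = (∑ j, b j * (m+1)^(j : ℕ)) → a = b := by
  intro n
  induction n with
  | zero => intro a b _ _ _; funext j; exact j.elim0
  | succ n ih =>
    intro a b ha hb hsum
    have key : ∀ c : Fin (n+1) → ℕ,
        (∑ j, c j * (m+1)^(j : ℕ))
          = c 0 + (m+1) * ∑ j : Fin n, c j.succ * (m+1)^(j : ℕ) := by
      intro c
      rw [Fin.sum_univ_succ, Finset.mul_sum]
      simp only [Fin.val_zero, pow_zero, mul_one, Fin.val_succ]
      congr 1
      refine Finset.sum_congr rfl (fun j _ => ?_)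
      ring
    rw [key a, key b] at hsum
    have h0 : a 0 = b 0 := by
      have hma : a 0 % (m+1) = a 0 := Nat.mod_eq_of_lt (Nat.lt_succ_of_le (ha 0))
      have hmb : b 0 % (m+1) = b 0 := Nat.mod_eq_of_lt (Nat.lt_succ_of_le (hb 0))
      calc a 0 = (a 0 + (m+1) * ∑ j : Fin n, a j.succ * (m+1)^(j:ℕ)) % (m+1) := by
              rw [Nat.add_mul_mod_self_left, hma]
        _ = (b 0 + (m+1) * ∑ j : Fin n, b j.succ * (m+1)^(j:ℕ)) % (m+1) := by rw [hsum]
        _ = b 0 := by rw [Nat.add_mul_mod_self_left, hmb]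
    rw [h0] at hsum
    have htail : (fun j : Fin n => a j.succ) = (fun j => b j.succ) := by
      apply ih _ _ (fun j => ha j.succ) (fun j => hb j.succ)
      have := Nat.add_left_cancel hsum
      exact Nat.eq_of_mul_eq_mul_left (Nat.succ_pos m) this
    funext j
    refine Fin.cases ?_ ?_ j
    · exact h0
    · intro i; exact congrFun htail i

/-- linear independence of monomials on the positive orthant -/
lemma monoIndep (m n : ℕ) (ℓ : IndexSet m n → ℝ)
    (h : ∀ t : Fin n → ℝ, (∀ j, 0 < t j) →
      ∑ α : IndexSet m n, ℓ α * ∏ j, t j ^ (α.1 j) = 0) :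
    ℓ = 0 := by
  classical
  set e : IndexSet m n → ℕ := fun α => ∑ j, α.1 j * (m+1)^(j : ℕ) with he
  have einj : Function.Injective e := by
    intro a b hab
    exact Subtype.ext (digit_inj m a.1 b.1 (single_le m n a) (single_le m n b) hab)
  set p : Polynomial ℝ := ∑ α : IndexSet m n, Polynomial.C (ℓ α) * Polynomial.X ^ (e α)
    with hp
  have hroot : ∀ c : ℝ, 0 < c → p.IsRoot c := by
    intro c hc
    have hmain := h (fun j => c ^ ((m+1)^(j : ℕ))) (fun j => pow_pos hc _)
    have : p.eval c = ∑ α : IndexSet m n, ℓ α * ∏ j : Fin n, (c ^ ((m+1)^(j:ℕ))) ^ (α.1 j) := by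
      rw [hp, Polynomial.eval_finset_sum]
      refine Finset.sum_congr rfl (fun α _ => ?_)
      simp only [Polynomial.eval_mul, Polynomial.eval_C, Polynomial.eval_pow,
        Polynomial.eval_X]
      congr 1
      rw [he]
      calc c ^ (∑ j, α.1 j * (m+1)^(j:ℕ))
          = ∏ j : Fin n, c ^ (α.1 j * (m+1)^(j:ℕ)) := by
            rw [Finset.prod_pow_eq_pow_sum]
        _ = ∏ j : Fin n, (c ^ ((m+1)^(j:ℕ))) ^ (α.1 j) := by
            refine Finset.prod_congr rfl (fun j _ => ?_)
            rw [mul_comm, pow_mul]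
    unfold Polynomial.IsRoot
    show p.eval c = 0
    rw [this, hmain]
  have hp0 : p = 0 := by
    apply Polynomial.eq_zero_of_infinite_isRoot
    apply Set.Infinite.mono (s := Set.Ioi (0:ℝ)) (fun c hc => hroot c hc)
    exact Set.Ioi_infinite 0
  funext α
  have hc : p.coeff (e α) = ℓ α := by
    rw [hp, Polynomial.finset_sum_coeff]
    simp only [Polynomial.coeff_C_mul, Polynomial.coeff_X_pow]
    rw [Finset.sum_eq_single α]
    · simp
    · intro β _ hβ
      rw [if_neg (fun hcon => hβ (einj hcon.symm)), mul_zero]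
    · intro hcon
      exact absurd (Finset.mem_univ α) hcon
  rw [hp0] at hc
  simpa using hc.symm

open MeasureTheory in
lemma gamma_int_on (k : ℕ) :
    IntegrableOn (fun x : ℝ => x ^ k * Real.exp (-x)) (Set.Ioi 0) := by
  have h := Real.GammaIntegral_convergent (s := (k : ℝ) + 1) (by positivity)
  have hfe : (fun x : ℝ => Real.exp (-x) * x ^ ((k : ℝ) + 1 - 1))
      = (fun x : ℝ => x ^ k * Real.exp (-x)) := by
    funext x
    rw [add_sub_cancel_right, Real.rpow_natCast, mul_comm]
  rwa [hfe] at h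

open MeasureTheory in
lemma gamma_int_val (k : ℕ) :
    ∫ x in Set.Ioi 0, x ^ k * Real.exp (-x) = (k.factorial : ℝ) := by
  have h := (Real.Gamma_eq_integral (s := (k : ℝ) + 1) (by positivity)).symm
  have hfe : (fun x : ℝ => Real.exp (-x) * x ^ ((k : ℝ) + 1 - 1))
      = (fun x : ℝ => x ^ k * Real.exp (-x)) := by
    funext x
    rw [add_sub_cancel_right, Real.rpow_natCast, mul_comm]
  rw [hfe] at h
  rw [h, Real.Gamma_nat_eq_factorial k]

noncomputable def hfun (d : ℕ) : ℝ → ℝ :=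
  Set.indicator (Set.Ioi 0) (fun v => v ^ d * Real.exp (-v))

open MeasureTheory in
lemma hfun_integrable (d : ℕ) : Integrable (hfun d) :=
  (gamma_int_on d).integrable_indicator measurableSet_Ioi

open MeasureTheory in
lemma hfun_integral (d : ℕ) : ∫ v, hfun d v = (d.factorial : ℝ) := by
  rw [hfun, integral_indicator measurableSet_Ioi]
  exact gamma_int_val d

open MeasureTheory in
/-- key positivity lemma via the moment integral -/
lemma keyB_s3 (m n : ℕ) (ℓ : IndexSet m n → ℝ)
    (hsign : ∀ t : Fin n → ℝ, (∀ j, 0 < t j) →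
        (∑ α : IndexSet m n, ℓ α * ∏ j, t j ^ (α.1 j)) ≤ 0)
    (hpos : 0 ≤ ∑ α : IndexSet m n, ℓ α *
        ((∏ j, ((α.1 j).factorial : ℝ)) * ((m - ∑ j, α.1 j).factorial : ℝ))) :
    ℓ = 0 := by
  classical
  set d : IndexSet m n → Fin (n+1) → ℕ :=
    fun α => Fin.snoc (fun j => α.1 j) (m - ∑ j, α.1 j) with hd
  set G : IndexSet m n → (Fin (n+1) → ℝ) → ℝ := fun α y => ∏ i, hfun (d α i) (y i)
    with hG
  set W : (Fin (n+1) → ℝ) → ℝ := fun y => ∑ α : IndexSet m n, ℓ α * G α y with hW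
  have hGint : ∀ α : IndexSet m n, Integrable (G α) := fun α =>
    Integrable.fintype_prod (f := fun i => hfun (d α i)) (fun i => hfun_integrable _)
  have hWint : Integrable W :=
    integrable_finset_sum _ (fun α _ => (hGint α).const_mul _)
  have hGval : ∀ α : IndexSet m n,
      ∫ y, G α y = (∏ j, ((α.1 j).factorial : ℝ)) * ((m - ∑ j, α.1 j).factorial : ℝ) := by
    intro α
    rw [hG]
    beta_reduce
    rw [volume_pi, integral_fintype_prod_eq_prod (f := fun i => hfun (d α i))]
    calc (∏ i, ∫ v, hfun (d α i) v) = ∏ i, ((d α i).factorial : ℝ) :=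
          Finset.prod_congr rfl (fun i _ => hfun_integral _)
      _ = (∏ j, ((α.1 j).factorial : ℝ)) * ((m - ∑ j, α.1 j).factorial : ℝ) := by
          rw [Fin.prod_univ_castSucc]
          simp [hd]
  have hWval : ∫ y, W y = ∑ α : IndexSet m n, ℓ α *
      ((∏ j, ((α.1 j).factorial : ℝ)) * ((m - ∑ j, α.1 j).factorial : ℝ)) := by
    rw [hW, integral_finset_sum _ (fun α _ => (hGint α).const_mul _)]
    refine Finset.sum_congr rfl (fun α _ => ?_)
    rw [integral_const_mul, hGval α]
  have h0le : 0 ≤ ∫ y, W y := hWval ▸ hpos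
  have hWoff : ∀ y : Fin (n+1) → ℝ, ¬ (∀ i, 0 < y i) → W y = 0 := by
    intro y hy
    push_neg at hy
    obtain ⟨i, hi⟩ := hy
    have hGz : ∀ α : IndexSet m n, G α y = 0 := by
      intro α
      apply Finset.prod_eq_zero (Finset.mem_univ i)
      exact Set.indicator_of_notMem (by simpa using hi) _
    simp [hW, hGz]
  set F : (Fin (n+1) → ℝ) → ℝ := fun y =>
    (∑ α : IndexSet m n, ℓ α *
        ∏ j : Fin n, (y (Fin.castSucc j) / y (Fin.last n)) ^ (α.1 j)) *
      ((y (Fin.last n)) ^ m * ∏ i, Real.exp (-(y i))) with hF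
  have hWon : ∀ y : Fin (n+1) → ℝ, (∀ i, 0 < y i) → W y = F y := by
    intro y hy
    have hL : 0 < y (Fin.last n) := hy _
    have hterm : ∀ α : IndexSet m n, ℓ α * G α y =
        (ℓ α * ∏ j : Fin n, (y (Fin.castSucc j) / y (Fin.last n)) ^ (α.1 j)) *
          ((y (Fin.last n)) ^ m * ∏ i, Real.exp (-(y i))) := by
      intro α
      have hGy : G α y = ((∏ j : Fin n, (y (Fin.castSucc j)) ^ (α.1 j)) *
          (y (Fin.last n)) ^ (m - ∑ j, α.1 j)) * ∏ i, Real.exp (-(y i)) := by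
        rw [hG]
        calc (∏ i, hfun (d α i) (y i))
            = ∏ i, (y i ^ (d α i) * Real.exp (-(y i))) :=
              Finset.prod_congr rfl (fun i _ =>
                Set.indicator_of_mem (by simpa using hy i) _)
          _ = (∏ i, y i ^ (d α i)) * ∏ i, Real.exp (-(y i)) :=
              Finset.prod_mul_distrib
          _ = ((∏ j : Fin n, (y (Fin.castSucc j)) ^ (α.1 j)) *
              (y (Fin.last n)) ^ (m - ∑ j, α.1 j)) * ∏ i, Real.exp (-(y i)) := by
              rw [Fin.prod_univ_castSucc]
              simp [hd]
      rw [hGy]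
      have hpow : (∏ j : Fin n, (y (Fin.castSucc j) / y (Fin.last n)) ^ (α.1 j)) *
          (y (Fin.last n)) ^ m =
          (∏ j : Fin n, (y (Fin.castSucc j)) ^ (α.1 j)) *
            (y (Fin.last n)) ^ (m - ∑ j, α.1 j) := by
        have hsub : (y (Fin.last n)) ^ (m - ∑ j, α.1 j)
            = (y (Fin.last n)) ^ m * ((y (Fin.last n)) ^ (∑ j, α.1 j))⁻¹ :=
          pow_sub₀ _ hL.ne' α.2
        rw [hsub]
        simp only [div_pow]
        rw [Finset.prod_div_distrib, Finset.prod_pow_eq_pow_sum]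
        field_simp
      rw [← hpow]
      ring
    rw [hW, hF]
    simp only []
    rw [Finset.sum_congr rfl (fun α _ => hterm α), ← Finset.sum_mul]
  have hWle : ∀ y : Fin (n+1) → ℝ, W y ≤ 0 := by
    intro y
    by_cases hy : ∀ i, 0 < y i
    · rw [hWon y hy]
      have hL : 0 < y (Fin.last n) := hy _
      have hP : (∑ α : IndexSet m n, ℓ α *
          ∏ j : Fin n, (y (Fin.castSucc j) / y (Fin.last n)) ^ (α.1 j)) ≤ 0 :=
        hsign _ (fun j => div_pos (hy _) hL)
      have hR : 0 ≤ (y (Fin.last n)) ^ m * ∏ i, Real.exp (-(y i)) := by positivity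
      exact mul_nonpos_of_nonpos_of_nonneg hP hR
    · rw [hWoff y hy]
  -- now show P ≡ 0 on the positive orthant
  have hPzero : ∀ t : Fin n → ℝ, (∀ j, 0 < t j) →
      ∑ α : IndexSet m n, ℓ α * ∏ j, t j ^ (α.1 j) = 0 := by
    intro t ht
    by_contra hne
    have hPlt : (∑ α : IndexSet m n, ℓ α * ∏ j, t j ^ (α.1 j)) < 0 :=
      lt_of_le_of_ne (hsign t ht) hne
    set y₀ : Fin (n+1) → ℝ := Fin.snoc t 1 with hy₀def
    have hy₀ : ∀ i, 0 < y₀ i := by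
      intro i
      refine Fin.lastCases ?_ ?_ i
      · simp [hy₀def]
      · intro j; simpa [hy₀def] using ht j
    set U₀ : Set (Fin (n+1) → ℝ) := Set.pi Set.univ (fun _ => Set.Ioi (0:ℝ)) with hU₀
    have hU₀open : IsOpen U₀ := isOpen_set_pi Set.finite_univ (fun _ _ => isOpen_Ioi)
    have hy₀U₀ : y₀ ∈ U₀ := fun i _ => hy₀ i
    have hPc : Continuous (fun s : Fin n → ℝ =>
        ∑ α : IndexSet m n, ℓ α * ∏ j, s j ^ (α.1 j)) := by
      apply continuous_finset_sum
      intro α _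
      exact continuous_const.mul
        (continuous_finset_prod _ (fun j _ => (continuous_apply j).pow _))
    have htc : ContinuousOn
        (fun y : Fin (n+1) → ℝ => fun j : Fin n => y (Fin.castSucc j) / y (Fin.last n))
        U₀ := by
      apply continuousOn_pi.2
      intro j
      exact ContinuousOn.div
        (continuous_apply (Fin.castSucc j)).continuousOn
        (continuous_apply (Fin.last n)).continuousOn
        (fun y hy => ne_of_gt (hy (Fin.last n) (Set.mem_univ _)))
    have hrest : Continuous (fun y : Fin (n+1) → ℝ =>
        (y (Fin.last n)) ^ m * ∏ i, Real.exp (-(y i))) := by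
      exact ((continuous_apply _).pow _).mul
        (continuous_finset_prod _ (fun i _ => ((continuous_apply i).neg).rexp))
    have hFcont : ContinuousOn F U₀ := (hPc.comp_continuousOn htc).mul hrest.continuousOn
    set V : Set (Fin (n+1) → ℝ) := U₀ ∩ F ⁻¹' (Set.Iio 0) with hV
    have hVopen : IsOpen V := hFcont.isOpen_inter_preimage hU₀open isOpen_Iio
    have hy₀V : y₀ ∈ V := by
      constructor
      · exact hy₀U₀
      · show F y₀ < 0
        have h1 : y₀ (Fin.last n) = 1 := by simp [hy₀def]
        have h2 : ∀ j : Fin n, y₀ (Fin.castSucc j) = t j := by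
          intro j; simp [hy₀def]
        rw [hF]
        simp only [h1, h2, div_one, one_pow, one_mul]
        apply mul_neg_of_neg_of_pos hPlt
        positivity
    have hsupp : V ⊆ Function.support (fun y => -W y) := by
      intro y hy
      have hWy : W y = F y := hWon y (fun i => hy.1 i (Set.mem_univ _))
      have : F y < 0 := hy.2
      simp only [Function.mem_support]
      rw [hWy]
      exact ne_of_gt (by linarith)
    have hmeas : 0 < (volume : Measure (Fin (n+1) → ℝ)) V :=
      hVopen.measure_pos volume ⟨y₀, hy₀V⟩
    have hintpos : 0 < ∫ y, -W y := by
      rw [integral_pos_iff_support_of_nonneg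
        (Pi.le_def.mpr (fun y => neg_nonneg.2 (hWle y))) hWint.neg]
      exact lt_of_lt_of_le hmeas (measure_mono hsupp)
    rw [integral_neg] at hintpos
    linarith
  exact monoIndep m n ℓ hPzero


/-- The moment-vector map `v(x) = (e^{2⟨α+𝟏,x⟩})_{α ∈ 𝓘_m}`. -/
noncomputable def vMap (m n : ℕ) (x : Fin n → ℝ) : IndexSet m n → ℝ :=
  fun α => Real.exp (2 * ∑ j, ((α.1 j : ℝ) + 1) * x j)

/-- The target moment data `A = (A_α)_{α ∈ 𝓘_m}`, `A_α = (2π)^{-n} α!(m−|α|)!/m!`. -/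
noncomputable def AVec (m n : ℕ) : IndexSet m n → ℝ :=
  fun α => (1 / (2 * π) ^ n) *
    ((∏ j, ((α.1 j).factorial : ℝ)) * ((m - ∑ j, α.1 j).factorial : ℝ)
      / (m.factorial : ℝ))

/-- The cone generated by `{v(x) : x ∈ ℝⁿ}`: all finite nonnegative combinations. -/
def coneV (m n : ℕ) : Set (IndexSet m n → ℝ) :=
  {w | ∃ (k : ℕ) (a : Fin k → ℝ) (x : Fin k → (Fin n → ℝ)),
    (∀ i, 0 ≤ a i) ∧ w = ∑ i, a i • vMap m n (x i)}

lemma vMap_eq_prod (m n : ℕ) (x : Fin n → ℝ) :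
    vMap m n x = fun α => ∏ j, (Real.exp (2 * x j)) ^ (α.1 j + 1) := by
  funext α
  rw [vMap]
  have h1 : 2 * ∑ j, ((α.1 j : ℝ) + 1) * x j
      = ∑ j, (((α.1 j + 1 : ℕ) : ℝ)) * (2 * x j) := by
    rw [Finset.mul_sum]
    refine Finset.sum_congr rfl (fun j _ => ?_)
    push_cast
    ring
  rw [h1, Real.exp_sum]
  exact Finset.prod_congr rfl (fun j _ => Real.exp_nat_mul _ _)

lemma dual_repr (m n : ℕ) (f : (IndexSet m n → ℝ) →ₗ[ℝ] ℝ) (w : IndexSet m n → ℝ) :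
    f w = ∑ α : IndexSet m n, w α * f (Pi.single α 1) := by
  conv_lhs => rw [← Finset.univ_sum_single w]
  rw [map_sum]
  refine Finset.sum_congr rfl (fun α _ => ?_)
  have h : Pi.single α (w α) = w α • (Pi.single α 1 : IndexSet m n → ℝ) := by
    rw [← Pi.single_smul, smul_eq_mul, mul_one]
  rw [h, map_smul, smul_eq_mul]

lemma coneV_zero (m n : ℕ) : (0 : IndexSet m n → ℝ) ∈ coneV m n :=
  ⟨0, Fin.elim0, Fin.elim0, fun i => i.elim0, by simp⟩

lemma coneV_add (m n : ℕ) {w₁ w₂ : IndexSet m n → ℝ}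
    (h₁ : w₁ ∈ coneV m n) (h₂ : w₂ ∈ coneV m n) : w₁ + w₂ ∈ coneV m n := by
  obtain ⟨k₁, a₁, x₁, ha₁, rfl⟩ := h₁
  obtain ⟨k₂, a₂, x₂, ha₂, rfl⟩ := h₂
  refine ⟨k₁ + k₂, Fin.append a₁ a₂, Fin.append x₁ x₂, ?_, ?_⟩
  · intro i
    refine Fin.addCases ?_ ?_ i
    · intro j; rw [Fin.append_left]; exact ha₁ j
    · intro j; rw [Fin.append_right]; exact ha₂ j
  · rw [Fin.sum_univ_add]
    congr 1
    · refine Finset.sum_congr rfl (fun i _ => ?_)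
      rw [Fin.append_left, Fin.append_left]
    · refine Finset.sum_congr rfl (fun i _ => ?_)
      rw [Fin.append_right, Fin.append_right]

lemma coneV_smul (m n : ℕ) {w : IndexSet m n → ℝ} {c : ℝ}
    (hc : 0 ≤ c) (h : w ∈ coneV m n) : c • w ∈ coneV m n := by
  obtain ⟨k, a, x, ha, rfl⟩ := h
  refine ⟨k, fun i => c * a i, x, fun i => mul_nonneg hc (ha i), ?_⟩
  rw [Finset.smul_sum]
  exact Finset.sum_congr rfl (fun i _ => (smul_smul c (a i) _))

lemma coneV_convex (m n : ℕ) : Convex ℝ (coneV m n) := by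
  intro w₁ h₁ w₂ h₂ a b ha hb _
  exact coneV_add m n (coneV_smul m n ha h₁) (coneV_smul m n hb h₂)

lemma coneV_mem_smul_vMap (m n : ℕ) {c : ℝ} (hc : 0 ≤ c) (x : Fin n → ℝ) :
    c • vMap m n x ∈ coneV m n := by
  refine ⟨1, fun _ => c, fun _ => x, fun _ => hc, ?_⟩
  rw [Fin.sum_univ_one]

lemma span_vMap_top (m n : ℕ) :
    Submodule.span ℝ (Set.range (vMap m n)) = ⊤ := by
  classical
  by_contra hne
  obtain ⟨f, hf0, hker⟩ := Submodule.exists_dual_map_eq_bot_of_lt_top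
    (lt_top_iff_ne_top.mpr hne) inferInstance
  have hvan : ∀ x : Fin n → ℝ, f (vMap m n x) = 0 := by
    intro x
    have hmem : f (vMap m n x) ∈
        Submodule.map f (Submodule.span ℝ (Set.range (vMap m n))) :=
      Submodule.mem_map_of_mem (Submodule.subset_span ⟨x, rfl⟩)
    rw [hker] at hmem
    simpa using hmem
  set ℓ : IndexSet m n → ℝ := fun α => f (Pi.single α 1) with hℓ
  have hP : ∀ t : Fin n → ℝ, (∀ j, 0 < t j) →
      ∑ α : IndexSet m n, ℓ α * ∏ j, t j ^ (α.1 j) = 0 := by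
    intro t ht
    set x : Fin n → ℝ := fun j => Real.log (t j) / 2 with hx
    have hexp : ∀ j, Real.exp (2 * x j) = t j := by
      intro j
      rw [hx]
      have : 2 * (Real.log (t j) / 2) = Real.log (t j) := by ring
      rw [this, Real.exp_log (ht j)]
    have h1 : f (vMap m n x) = (∏ j, t j) *
        ∑ α : IndexSet m n, ℓ α * ∏ j, t j ^ (α.1 j) := by
      rw [dual_repr m n f, vMap_eq_prod]
      simp only [hexp]
      rw [Finset.mul_sum]
      refine Finset.sum_congr rfl (fun α _ => ?_)
      have hps : ∏ j, t j ^ (α.1 j + 1) = (∏ j, t j ^ (α.1 j)) * ∏ j, t j := by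
        rw [← Finset.prod_mul_distrib]
        exact Finset.prod_congr rfl (fun j _ => pow_succ _ _)
      rw [hps]
      ring
    rw [hvan x] at h1
    have hprodpos : 0 < ∏ j, t j := Finset.prod_pos (fun j _ => ht j)
    have := h1.symm
    rcases mul_eq_zero.mp this with h | h
    · exact absurd h (ne_of_gt hprodpos)
    · exact h
  have hl0 : ℓ = 0 := monoIndep m n ℓ hP
  apply hf0
  apply LinearMap.ext
  intro w
  rw [dual_repr m n f w]
  have : ∀ α : IndexSet m n, f (Pi.single α 1) = 0 := fun α => congrFun hl0 α
  simp [this]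

lemma interior_coneV_nonempty (m n : ℕ) : (interior (coneV m n)).Nonempty := by
  classical
  obtain ⟨b, hbsub, hbspan, hbli⟩ := exists_linearIndependent ℝ (Set.range (vMap m n))
  rw [span_vMap_top] at hbspan
  let B : Module.Basis b ℝ (IndexSet m n → ℝ) :=
    Module.Basis.mk hbli (by rw [Subtype.range_coe]; exact hbspan.ge)
  haveI : Fintype b := FiniteDimensional.fintypeBasisIndex B
  set O : Set (b → ℝ) := Set.pi Set.univ (fun _ => Set.Ioi (0:ℝ)) with hO
  have hOopen : IsOpen O := isOpen_set_pi Set.finite_univ (fun _ _ => isOpen_Ioi)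
  have hcont : Continuous (fun w : IndexSet m n → ℝ => B.equivFun w) :=
    LinearMap.continuous_of_finiteDimensional B.equivFun.toLinearMap
  set U : Set (IndexSet m n → ℝ) := (fun w => B.equivFun w) ⁻¹' O with hU
  have hUopen : IsOpen U := hOopen.preimage hcont
  have hUK : U ⊆ coneV m n := by
    intro w hw
    choose xfun hxfun using (fun i : b => hbsub i.2)
    refine ⟨Fintype.card b,
      fun i => B.equivFun w ((Fintype.equivFin b).symm i),
      fun i => xfun ((Fintype.equivFin b).symm i),
      fun i => le_of_lt (hw ((Fintype.equivFin b).symm i) (Set.mem_univ _)), ?_⟩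
    have hsum := Equiv.sum_comp (Fintype.equivFin b).symm
      (fun i : b => B.equivFun w i • vMap m n (xfun i))
    rw [hsum]
    have : ∀ i : b, vMap m n (xfun i) = B i := by
      intro i
      rw [Module.Basis.mk_apply]
      exact hxfun i
    calc w = ∑ i : b, B.equivFun w i • B i := (B.sum_equivFun w).symm
      _ = ∑ i : b, B.equivFun w i • vMap m n (xfun i) := by
          exact Finset.sum_congr rfl (fun i _ => by rw [this i])
  have hw₀ : B.equivFun.symm (fun _ => 1) ∈ U := by
    show B.equivFun (B.equivFun.symm _) ∈ O
    rw [LinearEquiv.apply_symm_apply]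
    exact fun i _ => Set.mem_Ioi.mpr one_pos
  exact ⟨_, interior_maximal hUK hUopen hw₀⟩

/-- The vector `A` lies in the interior of the cone `K_v` generated by
`{v(x) : x ∈ ℝⁿ}` in `ℝᴺ` (with `N = #𝓘_m`, coordinates indexed by `𝓘_m`). -/
theorem stmt3 (m n : ℕ) (hm : 0 < m) (hn : 0 < n) :
    AVec m n ∈ interior (coneV m n) := by
  classical
  by_contra hA
  have hconv : Convex ℝ (coneV m n) := coneV_convex m n
  obtain ⟨y, hy⟩ := interior_coneV_nonempty m n
  obtain ⟨f, hsep⟩ := geometric_hahn_banach_open_point hconv.interior isOpen_interior hA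
  have hKA : ∀ w ∈ coneV m n, f w ≤ f (AVec m n) := by
    intro w hw
    by_contra hlt
    push_neg at hlt
    have key : ∀ θ : ℝ, 0 < θ → θ ≤ 1 →
        θ * f y + (1 - θ) * f w < f (AVec m n) := by
      intro θ hθ hθ1
      have hz : θ • y + (1 - θ) • w ∈ interior (coneV m n) :=
        hconv.combo_interior_closure_mem_interior hy (subset_closure hw) hθ
          (by linarith) (by ring)
      have := hsep _ hz
      simpa [map_add, map_smul, smul_eq_mul] using this
    set θ : ℝ := min 1 ((f w - f (AVec m n)) / (2 * (|f y - f w| + 1))) with hθdef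
    have habs : 0 ≤ |f y - f w| := abs_nonneg _
    have hθpos : 0 < θ :=
      lt_min one_pos (div_pos (by linarith) (by linarith))
    have hθ1 : θ ≤ 1 := min_le_left _ _
    have h2 := key θ hθpos hθ1
    have hb1 : θ ≤ (f w - f (AVec m n)) / (2 * (|f y - f w| + 1)) := min_le_right _ _
    have hb2 : -(θ * |f y - f w|) ≤ θ * (f y - f w) := by
      have h := neg_abs_le (f y - f w)
      nlinarith
    have hb3 : θ * |f y - f w| ≤ (f w - f (AVec m n)) / 2 := by
      have h4 : θ * |f y - f w| ≤
          ((f w - f (AVec m n)) / (2 * (|f y - f w| + 1))) * |f y - f w| := by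
        nlinarith
      have h5 : ((f w - f (AVec m n)) / (2 * (|f y - f w| + 1))) * |f y - f w| ≤
          (f w - f (AVec m n)) / 2 := by
        rw [div_mul_eq_mul_div, div_le_div_iff₀ (by linarith) (by norm_num)]
        nlinarith
      linarith
    nlinarith [h2]
  have hA0 : 0 ≤ f (AVec m n) := by
    have := hKA 0 (coneV_zero m n)
    simpa using this
  have hv : ∀ x : Fin n → ℝ, f (vMap m n x) ≤ 0 := by
    intro x
    by_contra hp
    push_neg at hp
    have hc : 0 ≤ (f (AVec m n) + 1) / f (vMap m n x) :=
      div_nonneg (by linarith) (le_of_lt hp)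
    have hmem := coneV_mem_smul_vMap m n hc x
    have hle := hKA _ hmem
    rw [map_smul, smul_eq_mul, div_mul_cancel₀ _ (ne_of_gt hp)] at hle
    linarith
  set ℓ : IndexSet m n → ℝ := fun α => f (Pi.single α 1) with hℓ
  have hrepr : ∀ w : IndexSet m n → ℝ, f w = ∑ α : IndexSet m n, w α * ℓ α :=
    fun w => dual_repr m n (f : (IndexSet m n → ℝ) →ₗ[ℝ] ℝ) w
  have hsign : ∀ t : Fin n → ℝ, (∀ j, 0 < t j) →
      (∑ α : IndexSet m n, ℓ α * ∏ j, t j ^ (α.1 j)) ≤ 0 := by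
    intro t ht
    set x : Fin n → ℝ := fun j => Real.log (t j) / 2 with hx
    have hexp : ∀ j, Real.exp (2 * x j) = t j := by
      intro j
      rw [hx]
      have h2 : 2 * (Real.log (t j) / 2) = Real.log (t j) := by ring
      rw [h2, Real.exp_log (ht j)]
    have h1 : f (vMap m n x) = (∏ j, t j) *
        ∑ α : IndexSet m n, ℓ α * ∏ j, t j ^ (α.1 j) := by
      rw [hrepr, vMap_eq_prod]
      simp only [hexp]
      rw [Finset.mul_sum]
      refine Finset.sum_congr rfl (fun α _ => ?_)
      have hps : ∏ j, t j ^ (α.1 j + 1) = (∏ j, t j ^ (α.1 j)) * ∏ j, t j := by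
        rw [← Finset.prod_mul_distrib]
        exact Finset.prod_congr rfl (fun j _ => pow_succ _ _)
      rw [hps]
      ring
    have h2 := hv x
    rw [h1] at h2
    have hprodpos : 0 < ∏ j, t j := Finset.prod_pos (fun j _ => ht j)
    by_contra h3
    push_neg at h3
    have := mul_pos hprodpos h3
    linarith
  have hposB : 0 ≤ ∑ α : IndexSet m n, ℓ α *
      ((∏ j, ((α.1 j).factorial : ℝ)) * ((m - ∑ j, α.1 j).factorial : ℝ)) := by
    have hπ : (0:ℝ) < π := Real.pi_pos
    have hAval : f (AVec m n) = (1 / ((2*π)^n * (m.factorial : ℝ))) *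
        ∑ α : IndexSet m n, ℓ α *
          ((∏ j, ((α.1 j).factorial : ℝ)) * ((m - ∑ j, α.1 j).factorial : ℝ)) := by
      rw [hrepr, Finset.mul_sum]
      refine Finset.sum_congr rfl (fun α _ => ?_)
      show AVec m n α * ℓ α = _
      rw [AVec]
      have hm0 : (m.factorial : ℝ) ≠ 0 := Nat.cast_ne_zero.mpr (Nat.factorial_ne_zero m)
      have hπ0 : ((2*π)^n : ℝ) ≠ 0 := by positivity
      field_simp
    have hcpos : 0 < 1 / ((2*π)^n * (m.factorial : ℝ)) := by positivity
    by_contra h3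
    push_neg at h3
    have := mul_neg_of_pos_of_neg hcpos h3
    rw [← hAval] at this
    linarith
  have hl0 : ℓ = 0 := keyB_s3 m n ℓ hsign hposB
  have hfy : f y = 0 := by
    rw [hrepr]
    have : ∀ α : IndexSet m n, ℓ α = 0 := fun α => congrFun hl0 α
    simp [this]
  have hfA : f (AVec m n) = 0 := by
    rw [hrepr]
    have : ∀ α : IndexSet m n, ℓ α = 0 := fun α => congrFun hl0 α
    simp [this]
  have := hsep y hy
  rw [hfy, hfA] at this
  exact lt_irrefl 0 this
end

section
/- Let N be a positive integer, S ⊆ ℝᴺ, and K_S = cone(S). If B lies in the interior of K_S, then there exist a positive integer M, vectors y₁,…,y_M ∈ S, and positive real numbers a₁,…,a_M > 0 such that B = Σ_{j=1}^M aⱼ yⱼ and the vectors y₁,…,y_M span ℝᴺ (in particular M ≥ N). -/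
/-- The cone generated by a subset `S ⊆ ℝᴺ`: all finite nonnegative combinations of
elements of `S`. -/
def coneOf (N : ℕ) (S : Set (EuclideanSpace ℝ (Fin N))) : Set (EuclideanSpace ℝ (Fin N)) :=
  {w | ∃ (k : ℕ) (a : Fin k → ℝ) (y : Fin k → EuclideanSpace ℝ (Fin N)),
    (∀ i, 0 ≤ a i) ∧ (∀ i, y i ∈ S) ∧ w = ∑ i, a i • y i}

/-- If `B` lies in the interior of `cone(S)` for `S ⊆ ℝᴺ`, then `B` is a
finite *strictly positive* combination `B = Σⱼ aⱼ yⱼ` of vectors `yⱼ ∈ S` which span `ℝᴺ`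
(in particular `M ≥ N`). -/
theorem stmt4 (N : ℕ) (hN : 0 < N) (S : Set (EuclideanSpace ℝ (Fin N)))
    (B : EuclideanSpace ℝ (Fin N)) (hB : B ∈ interior (coneOf N S)) :
    ∃ (M : ℕ) (y : Fin M → EuclideanSpace ℝ (Fin N)) (a : Fin M → ℝ),
      0 < M ∧ N ≤ M ∧ (∀ j, y j ∈ S) ∧ (∀ j, 0 < a j) ∧
      B = ∑ j, a j • y j ∧
      Submodule.span ℝ (Set.range y) = ⊤ := by
  classical
  -- The cone is contained in the span of `S`.
  have hsub : coneOf N S ⊆ (Submodule.span ℝ S : Set (EuclideanSpace ℝ (Fin N))) := by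
    rintro w ⟨k, a, y, ha, hy, rfl⟩
    exact Submodule.sum_mem _ fun i _ =>
      Submodule.smul_mem _ _ (Submodule.subset_span (hy i))
  have hspan : Submodule.span ℝ S = ⊤ :=
    Submodule.eq_top_of_nonempty_interior' _ ⟨B, interior_mono hsub hB⟩
  -- Extract a basis of `ℝᴺ` from `S`.
  obtain ⟨b, hbS, hbspan, hbind⟩ := exists_linearIndependent ℝ S
  rw [hspan] at hbspan
  have hbfin : b.Finite := hbind.setFinite
  haveI := hbfin.fintype
  have hbas : Submodule.span ℝ (Set.range ((↑) : b → EuclideanSpace ℝ (Fin N))) = ⊤ := by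
    rw [Subtype.range_coe, hbspan]
  have hcard : Fintype.card b = N := by
    have h1 := Module.finrank_eq_card_basis (Module.Basis.mk hbind (by rw [hbas]))
    rw [finrank_euclideanSpace_fin] at h1
    exact h1.symm
  set e0 := Fintype.equivFinOfCardEq hcard
  set v : Fin N → EuclideanSpace ℝ (Fin N) := fun i => ((e0.symm i : b) : EuclideanSpace ℝ (Fin N))
    with hv
  have hvS : ∀ i, v i ∈ S := fun i => hbS (e0.symm i).2
  have hvrange : Set.range v = b := by
    rw [hv]
    have : Set.range (fun i => ((e0.symm i : b) : EuclideanSpace ℝ (Fin N)))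
        = Set.range ((↑) : b → EuclideanSpace ℝ (Fin N)) :=
      Function.Surjective.range_comp e0.symm.surjective _
    rw [this, Subtype.range_coe]
  set w : EuclideanSpace ℝ (Fin N) := ∑ i, v i with hw
  -- Find a small ε with `B - ε • w` still in the cone.
  obtain ⟨δ, hδ, hball⟩ := Metric.isOpen_iff.mp isOpen_interior B hB
  set ε : ℝ := δ / (2 * (‖w‖ + 1)) with hε
  have hwpos : (0:ℝ) < ‖w‖ + 1 := by positivity
  have hεpos : 0 < ε := by positivity
  have hmem : B - ε • w ∈ coneOf N S := by
    apply interior_subset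
    apply hball
    rw [Metric.mem_ball, dist_eq_norm]
    have : B - ε • w - B = -(ε • w) := by abel
    rw [this, norm_neg, norm_smul, Real.norm_eq_abs, abs_of_pos hεpos]
    have h1 : ε * ‖w‖ < ε * (2 * (‖w‖ + 1)) := by
      apply mul_lt_mul_of_pos_left _ hεpos
      nlinarith [norm_nonneg w]
    have h2 : ε * (2 * (‖w‖ + 1)) = δ := by
      rw [hε]; field_simp [hwpos.ne']
    linarith
  obtain ⟨k, a, y, ha, hyS, hEq⟩ := hmem
  -- Combine: positive part of the cone decomposition plus `ε` times each basis vector.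
  set ι := {i : Fin k // 0 < a i} ⊕ Fin N
  set Y : ι → EuclideanSpace ℝ (Fin N) := Sum.elim (fun i => y i.1) v with hY
  set A : ι → ℝ := Sum.elim (fun i => a i.1) (fun _ => ε) with hA
  have hsum : ∑ j : ι, A j • Y j = B := by
    rw [Fintype.sum_sum_type]
    have h1 : ∑ i : {i : Fin k // 0 < a i}, A (Sum.inl i) • Y (Sum.inl i)
        = ∑ i : Fin k, a i • y i := by
      simp only [hA, hY, Sum.elim_inl]
      rw [← Finset.sum_filter_of_ne (p := fun i => 0 < a i) (s := Finset.univ)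
        (f := fun i => a i • y i) (by
          intro i _ hne
          rcases lt_or_eq_of_le (ha i) with h | h
          · exact h
          · exact absurd (show a i • y i = 0 by rw [← h, zero_smul]) hne)]
      exact (Finset.sum_subtype (Finset.filter (fun i => 0 < a i) Finset.univ)
        (fun x => by simp) (fun i => a i • y i)).symm
    have h2 : ∑ i : Fin N, A (Sum.inr i) • Y (Sum.inr i) = ε • w := by
      simp only [hA, hY, Sum.elim_inr, hw, Finset.smul_sum]
    rw [h1, h2, ← hEq]
    abel
  -- transfer to `Fin M`
  set M := Fintype.card ι with hM
  set eq : Fin M ≃ ι := (Fintype.equivFin ι).symm with heq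
  refine ⟨M, Y ∘ eq, A ∘ eq, ?_, ?_, ?_, ?_, ?_, ?_⟩
  case refine_3 => rintro j; rcases h : eq j with i | i <;> simp [hY, h, hyS, hvS]
  case refine_4 =>
    rintro j; rcases h : eq j with i | i <;> simp [hA, h, hεpos, i.2]
  case refine_5 =>
    rw [← hsum]
    exact (Equiv.sum_comp eq (fun j => A j • Y j)).symm
  case refine_6 =>
    rw [Set.range_comp, Equiv.range_eq_univ, Set.image_univ]
    apply top_unique
    rw [← hbspan, ← hvrange]
    apply Submodule.span_mono
    intro x ⟨i, hi⟩
    exact ⟨Sum.inr i, hi⟩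
  case refine_2 =>
    have hs : Submodule.span ℝ (Set.range (Y ∘ eq)) = ⊤ := by
      rw [Set.range_comp, Equiv.range_eq_univ, Set.image_univ]
      apply top_unique
      rw [← hbspan, ← hvrange]
      apply Submodule.span_mono
      intro x ⟨i, hi⟩
      exact ⟨Sum.inr i, hi⟩
    have := finrank_range_le_card (R := ℝ) (Y ∘ eq)
    rw [Set.finrank, hs, finrank_top, finrank_euclideanSpace_fin, Fintype.card_fin] at this
    exact this
  case refine_1 =>
    have hs : Submodule.span ℝ (Set.range (Y ∘ eq)) = ⊤ := by
      rw [Set.range_comp, Equiv.range_eq_univ, Set.image_univ]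
      apply top_unique
      rw [← hbspan, ← hvrange]
      apply Submodule.span_mono
      intro x ⟨i, hi⟩
      exact ⟨Sum.inr i, hi⟩
    have := finrank_range_le_card (R := ℝ) (Y ∘ eq)
    rw [Set.finrank, hs, finrank_top, finrank_euclideanSpace_fin, Fintype.card_fin] at this
    omega
end

section
/- Let n ≥ 2 and N ≥ 2 be integers, let 0 < c < 1, 0 < μ < 1, and 0 < s₀ ≤ 1/N. Define T̃ = {x ∈ ℝⁿ : μ c s₀ < e^{2x₁} + ⋯ + e^{2xₙ} < c s₀}. Then for every multi-index α ∈ ℕⁿ, ∫_{T̃} e^{2⟨α+𝟏,x⟩} dx < c²/(2ⁿ N). -/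
open MeasureTheory Real

/-- For `n, N ≥ 2`, `0 < c < 1`, `0 < μ < 1`, `0 < s₀ ≤ 1/N`, and
`T̃ = {x ∈ ℝⁿ : μcs₀ < Σⱼ e^{2xⱼ} < cs₀}`, every multi-index `α ∈ ℕⁿ` satisfies
`∫_{T̃} e^{2⟨α+𝟏,x⟩} dx < c²/(2ⁿN)`. -/
theorem stmt7 (n N : ℕ) (hn : 2 ≤ n) (hN : 2 ≤ N)
    (c μ s₀ : ℝ) (hc0 : 0 < c) (hc1 : c < 1) (hμ0 : 0 < μ) (hμ1 : μ < 1)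
    (hs0 : 0 < s₀) (hs1 : s₀ ≤ 1 / N) (α : Fin n → ℕ) :
    (∫⁻ x in {x : Fin n → ℝ |
        μ * c * s₀ < ∑ j, Real.exp (2 * x j) ∧ ∑ j, Real.exp (2 * x j) < c * s₀},
      ENNReal.ofReal (Real.exp (2 * ∑ j, ((α j : ℝ) + 1) * x j)))
    < ENNReal.ofReal (c ^ 2 / (2 ^ n * N)) := by
  have hN0 : (0:ℝ) < N := by positivity
  have hN2 : (2:ℝ) ≤ N := by exact_mod_cast hN
  have hcs : 0 < c * s₀ := mul_pos hc0 hs0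
  have hs01 : s₀ ≤ 1 := hs1.trans (by rw [div_le_one hN0]; linarith)
  have hcs1 : c * s₀ < 1 := by nlinarith
  set L : ℝ := Real.log (c * s₀) / 2 with hLdef
  have h2L : 2 * L = Real.log (c * s₀) := by rw [hLdef]; ring
  have hexpL : Real.exp (2 * L) = c * s₀ := by rw [h2L, Real.exp_log hcs]
  have hL0 : L ≤ 0 := by
    have := Real.log_neg hcs hcs1
    rw [hLdef]; linarith
  set T : Set (Fin n → ℝ) := {x : Fin n → ℝ |
      μ * c * s₀ < ∑ j, Real.exp (2 * x j) ∧ ∑ j, Real.exp (2 * x j) < c * s₀} with hT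
  have hsum_meas : Measurable fun x : Fin n → ℝ => ∑ j, Real.exp (2 * x j) := by
    apply Finset.measurable_sum
    intro j _
    exact (Real.continuous_exp.comp (continuous_const.mul (continuous_apply j))).measurable
  have hTmeas : MeasurableSet T :=
    (measurableSet_lt measurable_const hsum_meas).inter
      (measurableSet_lt hsum_meas measurable_const)
  -- the one-dimensional majorant
  set F : ℝ → ℝ := (Set.Iic L).indicator (fun t => Real.exp (2 * t)) with hFdef
  have hIexp : IntegrableOn (fun t => Real.exp (2 * t)) (Set.Iic L) := by
    refine Integrable.mono' ((integrableOn_exp_Iic L).const_mul (Real.exp L)) ?_ ?_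
    · exact (Real.continuous_exp.comp (continuous_const.mul continuous_id)).aestronglyMeasurable
    · filter_upwards [ae_restrict_mem measurableSet_Iic] with t ht
      rw [Real.norm_of_nonneg (Real.exp_pos _).le]
      have h1 : Real.exp (2 * t) = Real.exp t * Real.exp t := by
        rw [← Real.exp_add]; ring_nf
      rw [h1]
      have : Real.exp t ≤ Real.exp L := Real.exp_le_exp.2 ht
      nlinarith [Real.exp_pos t, Real.exp_pos L]
  have hF : Integrable F := hIexp.integrable_indicator measurableSet_Iic
  have hFnonneg : ∀ t, 0 ≤ F t := fun t =>
    Set.indicator_nonneg (fun s _ => (Real.exp_pos _).le) t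
  have hFint : ∫ t, F t = c * s₀ / 2 := by
    rw [hFdef, integral_indicator measurableSet_Iic]
    have hderiv : ∀ x ∈ Set.Iic L, HasDerivAt (fun t => Real.exp (2 * t) / 2)
        (Real.exp (2 * x)) x := by
      intro x _
      have h := (Real.hasDerivAt_exp (2 * x)).comp x ((hasDerivAt_id x).const_mul 2)
      have h2 := h.div_const 2
      simpa [mul_comm, mul_div_assoc] using h2
    have htend : Filter.Tendsto (fun t => Real.exp (2 * t) / 2) Filter.atBot (nhds 0) := by
      have h1 : Filter.Tendsto (fun t : ℝ => 2 * t) Filter.atBot Filter.atBot :=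
        Filter.tendsto_id.const_mul_atBot (by norm_num)
      have h2 := Real.tendsto_exp_atBot.comp h1
      have := h2.div_const 2
      simpa using this
    rw [integral_Iic_of_hasDerivAt_of_tendsto' hderiv hIexp htend, hexpL, sub_zero]
  -- pointwise bound
  have hpt : ∀ x : Fin n → ℝ,
      T.indicator (fun x => ENNReal.ofReal (Real.exp (2 * ∑ j, ((α j : ℝ) + 1) * x j))) x
        ≤ ENNReal.ofReal (∏ j, F (x j)) := by
    intro x
    by_cases hx : x ∈ T
    · rw [Set.indicator_of_mem hx]
      have hxL : ∀ j, x j ≤ L := by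
        intro j
        have h1 : Real.exp (2 * x j) ≤ ∑ j, Real.exp (2 * x j) :=
          Finset.single_le_sum (f := fun i => Real.exp (2 * x i))
            (fun i _ => (Real.exp_pos _).le) (Finset.mem_univ j)
        have h2 : Real.exp (2 * x j) < Real.exp (2 * L) := by
          rw [hexpL]; exact lt_of_le_of_lt h1 hx.2
        have := Real.exp_lt_exp.1 h2
        linarith
      have hFx : ∀ j, F (x j) = Real.exp (2 * x j) := fun j =>
        Set.indicator_of_mem (Set.mem_Iic.2 (hxL j)) _
      apply ENNReal.ofReal_le_ofReal
      rw [Finset.prod_congr rfl (fun j _ => hFx j), ← Real.exp_sum]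
      apply Real.exp_le_exp.2
      rw [Finset.mul_sum]
      apply Finset.sum_le_sum
      intro j _
      have hxj0 : x j ≤ 0 := (hxL j).trans hL0
      have hαj : (0:ℝ) ≤ (α j : ℝ) := Nat.cast_nonneg _
      nlinarith
    · rw [Set.indicator_of_notMem hx]
      exact zero_le
  -- main chain
  calc (∫⁻ x in T, ENNReal.ofReal (Real.exp (2 * ∑ j, ((α j : ℝ) + 1) * x j)))
      = ∫⁻ x, T.indicator
          (fun x => ENNReal.ofReal (Real.exp (2 * ∑ j, ((α j : ℝ) + 1) * x j))) x :=
        (lintegral_indicator hTmeas _).symm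
    _ ≤ ∫⁻ x : Fin n → ℝ, ENNReal.ofReal (∏ j, F (x j)) := lintegral_mono hpt
    _ = ENNReal.ofReal (∫ x : Fin n → ℝ, ∏ j, F (x j)) := by
        exact (ofReal_integral_eq_lintegral_ofReal
          (Integrable.fintype_prod (𝕜 := ℝ) (fun _ => hF))
          (Filter.Eventually.of_forall (fun x => Finset.prod_nonneg fun j _ => hFnonneg _))).symm
    _ = ENNReal.ofReal ((c * s₀ / 2) ^ n) := by
        rw [integral_fintype_prod_volume_eq_pow (ι := Fin n) F, hFint, Fintype.card_fin]
    _ < ENNReal.ofReal (c ^ 2 / (2 ^ n * N)) := by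
        apply (ENNReal.ofReal_lt_ofReal_iff (by positivity)).2
        have key : c ^ n * s₀ ^ n < c ^ 2 / N := by
          have h1 : c ^ n ≤ c ^ 2 := pow_le_pow_of_le_one hc0.le hc1.le hn
          have h2 : s₀ ^ n ≤ s₀ ^ 2 := pow_le_pow_of_le_one hs0.le hs01 hn
          have h3 : s₀ ^ 2 ≤ (1 / N) ^ 2 := by
            apply pow_le_pow_left₀ hs0.le hs1
          have h4 : (1 / (N:ℝ)) ^ 2 < 1 / N := by
            rw [div_pow, one_pow]
            apply div_lt_div_of_pos_left one_pos hN0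
            nlinarith
          have h5 : s₀ ^ n < 1 / N := lt_of_le_of_lt (h2.trans h3) h4
          have h6 : c ^ n * s₀ ^ n ≤ c ^ 2 * s₀ ^ n := by
            apply mul_le_mul_of_nonneg_right h1 (by positivity)
          have h7 : c ^ 2 * s₀ ^ n < c ^ 2 * (1 / N) :=
            mul_lt_mul_of_pos_left h5 (by positivity)
          calc c ^ n * s₀ ^ n ≤ c ^ 2 * s₀ ^ n := h6
            _ < c ^ 2 * (1 / N) := h7
            _ = c ^ 2 / N := by ring
        have hexpand : (c * s₀ / 2) ^ n = c ^ n * s₀ ^ n / 2 ^ n := by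
          rw [div_pow, mul_pow]
        rw [hexpand]
        have h2n : (0:ℝ) < 2 ^ n := by positivity
        rw [div_lt_iff₀ h2n] at *
        calc c ^ n * s₀ ^ n < c ^ 2 / N := key
          _ = c ^ 2 / (2 ^ n * N) * 2 ^ n := by field_simp
end

section
/- Let n ≥ 1 and let U be an (n+1)×(n+1) complex unitary matrix, written in block form U = [[A, b],[cᵀ, d]] with A an n×n matrix, b, c ∈ ℂⁿ and d ∈ ℂ. Define F(z) = (Az + b)/(⟨c,z⟩ + d) on the open set where ⟨c,z⟩ + d ≠ 0, with ⟨c,z⟩ = Σⱼ cⱼ zⱼ. Then for every z in this set, |det F′(z)|² = |⟨c,z⟩ + d|^{−2(n+1)}, where F′(z) is the complex Jacobian matrix of F at z. -/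
open Matrix in
lemma aux_entry (n : ℕ) (A : Matrix (Fin n) (Fin n) ℂ) (b c : Fin n → ℂ) (d : ℂ)
    (F : (Fin n → ℂ) → (Fin n → ℂ))
    (hFdef : ∀ z : Fin n → ℂ, ∀ i : Fin n,
      F z i = ((∑ j, A i j * z j) + b i) / ((∑ j, c j * z j) + d))
    (M : Matrix (Fin n) (Fin n) ℂ) (z : Fin n → ℂ)
    (hM : HasFDerivAt F (LinearMap.toContinuousLinearMap (Matrix.toLin' M)) z)
    (hz : (∑ j, c j * z j) + d ≠ 0) (i j : Fin n) :
    M i j = (A i j * ((∑ k, c k * z k) + d) - ((∑ k, A i k * z k) + b i) * c j)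
      / ((∑ k, c k * z k) + d) ^ 2 := by
  set v : Fin n → ℂ := Pi.single j 1 with hv
  have hsum : ∀ (f : Fin n → ℂ) (t : ℂ),
      (∑ k, f k * (z + t • v) k) = (∑ k, f k * z k) + t * f j := by
    intro f t
    have h : ∀ k, f k * (z + t • v) k
        = f k * z k + (if k = j then t * f j else 0) := by
      intro k
      by_cases h : k = j
      · simp [h, hv, Pi.single_apply, mul_add]; ring
      · simp [h, hv, Pi.single_apply]
    rw [Finset.sum_congr rfl fun k _ => h k, Finset.sum_add_distrib,
      Finset.sum_ite_eq' Finset.univ j fun _ => t * f j]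
    simp
  -- curve
  have hγ : HasDerivAt (fun t : ℂ => z + t • v) v 0 := by
    simpa using ((hasDerivAt_id (0:ℂ)).smul_const v).const_add z
  have h2 : HasDerivAt (fun t : ℂ => F (z + t • v))
      ((LinearMap.toContinuousLinearMap (Matrix.toLin' M)) v) 0 := by
    refine HasFDerivAt.comp_hasDerivAt 0 ?_ hγ
    simpa using hM
  have h3 : HasDerivAt (fun t : ℂ => F (z + t • v) i)
      (((LinearMap.toContinuousLinearMap (Matrix.toLin' M)) v) i) 0 :=
    hasDerivAt_pi.1 h2 i
  -- explicit scalar function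
  have hfun : (fun t : ℂ => F (z + t • v) i)
      = fun t : ℂ => ((∑ k, A i k * z k) + t * A i j + b i)
        / ((∑ k, c k * z k) + t * c j + d) := by
    funext t
    rw [hFdef]
    rw [hsum (A i) t, hsum c t]
  have hden0 : (∑ k, c k * z k) + (0:ℂ) * c j + d ≠ 0 := by simpa using hz
  have hnum : HasDerivAt (fun t : ℂ => (∑ k, A i k * z k) + t * A i j + b i) (A i j) 0 :=
    ((hasDerivAt_mul_const (A i j)).const_add _).add_const _
  have hden : HasDerivAt (fun t : ℂ => (∑ k, c k * z k) + t * c j + d) (c j) 0 :=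
    ((hasDerivAt_mul_const (c j)).const_add _).add_const _
  have h5 := hnum.div hden hden0
  simp only [Pi.div_def] at h5
  rw [← hfun] at h5
  have := h3.unique h5
  have hlhs : ((LinearMap.toContinuousLinearMap (Matrix.toLin' M)) v) i = M i j := by
    simp [hv, Matrix.toLin'_apply, Matrix.mulVec_single]
  rw [hlhs] at this
  rw [this]
  simp

open Matrix in
lemma aux_det (n : ℕ) (U : Matrix (Fin (n + 1)) (Fin (n + 1)) ℂ)
    (z u : Fin n → ℂ) (w : ℂ) (hw : w ≠ 0)
    (hu : ∀ i, u i = (∑ j, U i.castSucc j.castSucc * z j) + U i.castSucc (Fin.last n))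
    (hwd : w = (∑ j, U (Fin.last n) j.castSucc * z j) + U (Fin.last n) (Fin.last n)) :
    (Matrix.det fun i j => U i.castSucc j.castSucc - u i * U (Fin.last n) j.castSucc * w⁻¹) * w
      = U.det := by
  classical
  set A : Matrix (Fin n) (Fin n) ℂ := fun i j => U i.castSucc j.castSucc with hA
  set B : Matrix (Fin n) (Fin 1) ℂ := fun i _ => U i.castSucc (Fin.last n) with hB
  set C : Matrix (Fin 1) (Fin n) ℂ := fun _ j => U (Fin.last n) j.castSucc with hC
  set D : Matrix (Fin 1) (Fin 1) ℂ := fun _ _ => U (Fin.last n) (Fin.last n) with hD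
  set Y : Matrix (Fin n) (Fin 1) ℂ := fun i _ => -(u i * w⁻¹) with hY
  set Z : Matrix (Fin n) (Fin 1) ℂ := fun j _ => z j with hZ
  set N : Matrix (Fin n) (Fin n) ℂ :=
    fun i j => U i.castSucc j.castSucc - u i * U (Fin.last n) j.castSucc * w⁻¹ with hN
  have he : ∀ i : Fin n, finSumFinEquiv (Sum.inl i) = i.castSucc := fun i => rfl
  have he' : finSumFinEquiv (Sum.inr (0 : Fin 1)) = Fin.last n := by
    apply Fin.ext; simp [finSumFinEquiv, Fin.natAdd]
  have hsub : U.submatrix finSumFinEquiv finSumFinEquiv = fromBlocks A B C D := by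
    ext i k
    cases i with
    | inl i => cases k with
      | inl k => simp [he, fromBlocks, hA]
      | inr k => rw [Subsingleton.elim k 0]; simp [he, he', fromBlocks, hB]
    | inr i => rw [Subsingleton.elim i 0]; cases k with
      | inl k => simp [he, he', fromBlocks, hC]
      | inr k => rw [Subsingleton.elim k 0]; simp [he', fromBlocks, hD]
  have key : fromBlocks 1 Y 0 1 * (fromBlocks A B C D * fromBlocks 1 Z 0 1)
      = fromBlocks N 0 C (of fun _ _ => w) := by
    rw [fromBlocks_multiply, fromBlocks_multiply]
    simp only [Matrix.mul_one, Matrix.one_mul, Matrix.mul_zero, Matrix.zero_mul,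
      zero_add, add_zero]
    ext i k
    cases i with
    | inl i => cases k with
      | inl k =>
        simp only [fromBlocks_apply₁₁, Matrix.add_apply, Matrix.mul_apply, Fin.sum_univ_one]
        simp only [hN, hY, hC, hA]
        ring
      | inr k =>
        simp only [fromBlocks_apply₁₂, Matrix.add_apply, Matrix.mul_apply, Fin.sum_univ_one, Matrix.zero_apply]
        simp only [hY, hA, hB, hC, hD, hZ]
        rw [hu i, hwd]
        have hw' : (∑ j : Fin n, U (Fin.last n) j.castSucc * z j
            + U (Fin.last n) (Fin.last n)) ≠ 0 := hwd ▸ hw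
        field_simp
        ring
    | inr i => cases k with
      | inl k => simp
      | inr k =>
        simp only [fromBlocks_apply₂₂, Matrix.add_apply, Matrix.mul_apply, Fin.sum_univ_one, of_apply]
        simp only [hC, hD, hZ]
        rw [hwd]
  have hdet := congrArg Matrix.det key
  have hUdet : (fromBlocks A B C D).det = U.det := by
    rw [← hsub, Matrix.det_submatrix_equiv_self]
  rw [det_mul, det_mul, hUdet, det_fromBlocks_zero₂₁, det_fromBlocks_zero₂₁,
    det_fromBlocks_zero₁₂] at hdet
  simp only [det_one, one_mul, mul_one] at hdet
  rw [hdet, Matrix.det_fin_one, of_apply]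


/-- For a unitary `(n+1)×(n+1)` matrix `U = [[A,b],[cᵀ,d]]` and the
Möbius map `F(z) = (Az+b)/(⟨c,z⟩+d)` defined where `⟨c,z⟩+d ≠ 0`, the complex Jacobian
satisfies `|det F′(z)|² = |⟨c,z⟩+d|^{−2(n+1)}`. -/
theorem stmt13 (n : ℕ) (hn : 1 ≤ n)
    (U : Matrix (Fin (n + 1)) (Fin (n + 1)) ℂ)
    (hU : U ∈ Matrix.unitaryGroup (Fin (n + 1)) ℂ)
    (F : (Fin n → ℂ) → (Fin n → ℂ))
    (hFdef : ∀ z : Fin n → ℂ, ∀ i : Fin n,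
      F z i = ((∑ j : Fin n, U i.castSucc j.castSucc * z j) + U i.castSucc (Fin.last n)) /
        ((∑ j : Fin n, U (Fin.last n) j.castSucc * z j) + U (Fin.last n) (Fin.last n)))
    (F' : (Fin n → ℂ) → Matrix (Fin n) (Fin n) ℂ)
    (hF' : ∀ z : Fin n → ℂ,
      (∑ j : Fin n, U (Fin.last n) j.castSucc * z j) + U (Fin.last n) (Fin.last n) ≠ 0 →
      HasFDerivAt F (LinearMap.toContinuousLinearMap (Matrix.toLin' (F' z))) z)
    (z : Fin n → ℂ)
    (hz : (∑ j : Fin n, U (Fin.last n) j.castSucc * z j)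
        + U (Fin.last n) (Fin.last n) ≠ 0) :
    ‖(F' z).det‖ ^ 2
      = ‖(∑ j : Fin n, U (Fin.last n) j.castSucc * z j)
            + U (Fin.last n) (Fin.last n)‖ ^ (-(2 * ((n : ℤ) + 1))) := by
  classical
  set w : ℂ := (∑ j : Fin n, U (Fin.last n) j.castSucc * z j)
      + U (Fin.last n) (Fin.last n) with hwd
  set u : Fin n → ℂ :=
      fun i => (∑ j, U i.castSucc j.castSucc * z j) + U i.castSucc (Fin.last n) with hud
  -- entries of F' z
  have hentry : ∀ i j, F' z i j
      = (U i.castSucc j.castSucc * w - u i * U (Fin.last n) j.castSucc) / w ^ 2 :=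
    fun i j => aux_entry n (fun i j => U i.castSucc j.castSucc)
      (fun i => U i.castSucc (Fin.last n)) (fun j => U (Fin.last n) j.castSucc)
      (U (Fin.last n) (Fin.last n)) F hFdef (F' z) z (hF' z hz) hz i j
  -- F' z = w⁻¹ • N
  have hFM : F' z = w⁻¹ •
      (fun i j => U i.castSucc j.castSucc - u i * U (Fin.last n) j.castSucc * w⁻¹ :
        Matrix (Fin n) (Fin n) ℂ) := by
    ext i j
    rw [hentry i j]
    have hw : w ≠ 0 := hz
    have hsmul : ∀ (M : Matrix (Fin n) (Fin n) ℂ) i j,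
        (w⁻¹ • M) i j = w⁻¹ * M i j := fun _ _ _ => rfl
    have hXw : U i.castSucc j.castSucc - u i * U (Fin.last n) j.castSucc * w⁻¹
        = (U i.castSucc j.castSucc * w - u i * U (Fin.last n) j.castSucc) / w := by
      field_simp
    change _ = w⁻¹ * (U i.castSucc j.castSucc - u i * U (Fin.last n) j.castSucc * w⁻¹)
    rw [hXw, pow_two, ← div_div, div_eq_inv_mul]
  have hw : w ≠ 0 := hz
  have hdetN : (Matrix.det fun i j =>
        U i.castSucc j.castSucc - u i * U (Fin.last n) j.castSucc * w⁻¹) * w = U.det :=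
    aux_det n U z u w hw (fun i => rfl) rfl
  have hdet : (F' z).det = w⁻¹ ^ n * (U.det * w⁻¹) := by
    rw [hFM]
    erw [Matrix.det_smul]
    rw [Fintype.card_fin]
    congr 1
    rw [← hdetN, mul_assoc, mul_inv_cancel₀ hw, mul_one]
  -- |det U|^2 = 1
  have hUabs : ‖U.det‖ ^ 2 = 1 := by
    have h1 := (Matrix.det_of_mem_unitary hU).1
    rw [Complex.star_def] at h1
    have := congrArg norm h1
    rwa [norm_mul, norm_one, Complex.norm_conj, ← sq] at this
  -- arithmetic
  have hr : ‖w‖ ≠ 0 := norm_ne_zero_iff.mpr hw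
  rw [hdet, norm_mul, norm_mul, norm_pow, norm_inv]
  have hexp : (-(2 * ((n : ℤ) + 1))) = -((2 * n + 2 : ℕ) : ℤ) := by push_cast; ring
  rw [hexp, zpow_neg, zpow_natCast]
  rw [mul_pow, mul_pow, ← pow_mul, hUabs]
  field_simp
  rw [one_div, inv_pow, show 2 * n + 2 = n * 2 + 2 by ring, pow_add, ← mul_assoc,
    inv_mul_cancel₀ (pow_ne_zero _ hr), one_mul]
end

section
/- Let D₁, D₂ ⊆ ℂⁿ be bounded nonempty connected open sets and let λ > 0. Assume that for all multi-indices α, β ∈ ℕⁿ, ∫_{D₁} z^α · conj(z^β) dV_{2n}(z) = λ ∫_{D₂} z^α · conj(z^β) dV_{2n}(z). Then λ = 1 and the symmetric difference D₁ Δ D₂ has Lebesgue measure zero. -/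
open MeasureTheory Bornology Set

section helpers

variable {Y : Type*} [TopologicalSpace Y] [CompactSpace Y] [MeasurableSpace Y]
  [OpensMeasurableSpace Y]

lemma cmIntegrable (ν : Measure Y) [IsFiniteMeasure ν] (g : C(Y, ℂ)) :
    Integrable g ν := by
  exact (BoundedContinuousFunction.mkOfCompact g).integrable (μ := ν)

lemma cmIntegralContinuous (ν : Measure Y) [IsFiniteMeasure ν] :
    Continuous fun g : C(Y, ℂ) => ∫ w, g w ∂ν := by
  let L : C(Y, ℂ) →ₗ[ℂ] ℂ :=
  { toFun := fun g => ∫ w, g w ∂ν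
    map_add' := fun f g => by
      simpa [ContinuousMap.add_apply] using integral_add (cmIntegrable ν f) (cmIntegrable ν g)
    map_smul' := fun c f => by
      simpa [ContinuousMap.smul_apply] using integral_smul c fun w => f w }
  have hb : ∀ g : C(Y, ℂ), ‖L g‖ ≤ (ν Set.univ).toReal * ‖g‖ := by
    intro g
    have : ‖∫ w, g w ∂ν‖ ≤ ‖g‖ * (ν Set.univ).toReal :=
      norm_integral_le_of_norm_le_const
        (Filter.Eventually.of_forall fun w => g.norm_coe_le_norm w)
    simpa [L, mul_comm] using this
  exact (L.mkContinuous _ hb).continuous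

end helpers

/-- Density of the span of monomials `z^α conj(z)^β` gives: if all monomial integrals are
proportional, then all continuous-function integrals are proportional. -/
lemma integral_eq_of_moments {n : ℕ} {K : Set (Fin n → ℂ)} [CompactSpace K]
    (ν₁ ν₂ : Measure K) [IsFiniteMeasure ν₁] [IsFiniteMeasure ν₂] (lam : ℝ)
    (hmom : ∀ α β : Fin n → ℕ,
      (∫ w : K, (∏ j, (w : Fin n → ℂ) j ^ α j)
          * (starRingEnd ℂ) (∏ j, (w : Fin n → ℂ) j ^ β j) ∂ν₁)
        = (lam : ℂ) * ∫ w : K, (∏ j, (w : Fin n → ℂ) j ^ α j)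
          * (starRingEnd ℂ) (∏ j, (w : Fin n → ℂ) j ^ β j) ∂ν₂) :
    ∀ g : C(K, ℂ), ∫ w, g w ∂ν₁ = (lam : ℂ) * ∫ w, g w ∂ν₂ := by
  classical
  set mon : (Fin n → ℕ) × (Fin n → ℕ) → C(K, ℂ) := fun p =>
    ⟨fun w => (∏ j, (w : Fin n → ℂ) j ^ p.1 j)
        * (starRingEnd ℂ) (∏ j, (w : Fin n → ℂ) j ^ p.2 j), by
      refine Continuous.mul ?_ (Continuous.comp continuous_star ?_) <;>
      exact continuous_finset_prod _ fun j _ =>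
        ((continuous_apply j).comp continuous_subtype_val).pow _⟩ with hmon
  have monprod : ∀ p q, mon p * mon q = mon (p.1 + q.1, p.2 + q.2) := by
    intro p q
    ext w
    simp only [hmon, ContinuousMap.mul_apply, ContinuousMap.coe_mk, Pi.add_apply, pow_add,
      Finset.prod_mul_distrib, map_mul]
    ring
  have monstar : ∀ p, star (mon p) = mon (p.2, p.1) := by
    intro p
    ext w
    simp only [hmon, ContinuousMap.star_apply, ContinuousMap.coe_mk, star_mul',
      starRingEnd_apply, star_star]
    exact mul_comm _ _
  have monone : mon (0, 0) = 1 := by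
    ext w
    simp [hmon]
  set S₀ : Submodule ℂ C(K, ℂ) := Submodule.span ℂ (Set.range mon) with hS₀
  have h1S : (1 : C(K, ℂ)) ∈ S₀ := monone ▸ Submodule.subset_span ⟨(0, 0), rfl⟩
  have hmulS : ∀ x y : C(K, ℂ), x ∈ S₀ → y ∈ S₀ → x * y ∈ S₀ := by
    intro x y hx hy
    have hxy := Submodule.mul_mem_mul hx hy
    rw [hS₀, Submodule.span_mul_span] at hxy
    refine Submodule.span_le.mpr ?_ hxy
    rintro f hf
    rw [Set.mem_mul] at hf
    obtain ⟨a, ⟨p, rfl⟩, b, ⟨q, rfl⟩, rfl⟩ := hf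
    exact Submodule.subset_span ⟨(p.1 + q.1, p.2 + q.2), (monprod p q).symm⟩
  have hstarS : ∀ x ∈ S₀, star x ∈ S₀ := by
    intro x hx
    refine Submodule.span_induction ?_ ?_ ?_ ?_ hx
    · rintro f ⟨p, rfl⟩
      exact (monstar p) ▸ Submodule.subset_span ⟨(p.2, p.1), rfl⟩
    · simpa using S₀.zero_mem
    · intro a b _ _ ha hb
      rw [star_add]; exact S₀.add_mem ha hb
    · intro c a _ ha
      rw [star_smul]; exact S₀.smul_mem _ ha
  set S : StarSubalgebra ℂ C(K, ℂ) :=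
    { toSubalgebra := S₀.toSubalgebra h1S hmulS
      star_mem' := fun hx => hstarS _ hx } with hS
  have hsep : S.SeparatesPoints := by
    intro x y hxy
    obtain ⟨j, hj⟩ : ∃ j, (x : Fin n → ℂ) j ≠ (y : Fin n → ℂ) j := by
      by_contra h
      push_neg at h
      exact hxy (Subtype.ext (funext h))
    have hcoord : ∀ w : K, mon (Pi.single j 1, 0) w = (w : Fin n → ℂ) j := by
      intro w
      simp only [hmon, ContinuousMap.coe_mk]
      rw [Finset.prod_eq_single j (fun i _ hi => by simp [Pi.single_eq_of_ne hi]) (by simp)]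
      simp
    refine ⟨_, ⟨mon (Pi.single j 1, 0),
      Submodule.subset_span ⟨(Pi.single j 1, 0), rfl⟩, rfl⟩, ?_⟩
    simpa only [hcoord] using hj
  have hdense : S.topologicalClosure = ⊤ :=
    ContinuousMap.starSubalgebra_topologicalClosure_eq_top_of_separatesPoints S hsep
  set Q : Set C(K, ℂ) := {g | ∫ w, g w ∂ν₁ = (lam : ℂ) * ∫ w, g w ∂ν₂} with hQ
  have hQclosed : IsClosed Q :=
    isClosed_eq (cmIntegralContinuous ν₁)
      (continuous_const.mul (cmIntegralContinuous ν₂))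
  have hmonQ : ∀ p, mon p ∈ Q := by
    rintro ⟨α, β⟩
    exact hmom α β
  have hSQ : (S : Set C(K, ℂ)) ⊆ Q := by
    intro g hg
    have hg' : g ∈ S₀ := hg
    refine Submodule.span_induction ?_ ?_ ?_ ?_ hg'
    · rintro f ⟨p, rfl⟩; exact hmonQ p
    · simp [hQ, integral_zero]
    · intro a b _ _ ha hb
      simp only [hQ, Set.mem_setOf_eq] at ha hb ⊢
      rw [show ((a + b : C(K, ℂ)) : K → ℂ) = (fun w => a w + b w) from rfl]
      rw [integral_add (cmIntegrable ν₁ a) (cmIntegrable ν₁ b),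
        integral_add (cmIntegrable ν₂ a) (cmIntegrable ν₂ b), ha, hb]
      ring
    · intro c a _ ha
      simp only [hQ, Set.mem_setOf_eq] at ha ⊢
      rw [show ((c • a : C(K, ℂ)) : K → ℂ) = (fun w => c • a w) from rfl]
      rw [integral_smul, integral_smul, ha]
      simp only [smul_eq_mul]; ring
  intro g
  have hg : g ∈ closure (S : Set C(K, ℂ)) := by
    have : g ∈ (S.topologicalClosure : Set C(K, ℂ)) := by
      rw [hdense]; trivial
    exact this
  exact closure_minimal hSQ hQclosed hg

/-- If two bounded nonempty connected open sets `D₁, D₂ ⊆ ℂⁿ` have all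
their complex moments proportional with ratio `λ > 0`, i.e.
`∫_{D₁} z^α conj(z^β) dV = λ ∫_{D₂} z^α conj(z^β) dV` for all multi-indices `α, β`, then
`λ = 1` and the symmetric difference `D₁ Δ D₂` has Lebesgue measure zero. -/
theorem stmt14 (n : ℕ) (hn : 0 < n) (D₁ D₂ : Set (Fin n → ℂ))
    (h₁ : D₁.Nonempty) (h₂ : D₂.Nonempty) (ho₁ : IsOpen D₁) (ho₂ : IsOpen D₂)
    (hc₁ : IsConnected D₁) (hc₂ : IsConnected D₂)
    (hb₁ : Bornology.IsBounded D₁) (hb₂ : Bornology.IsBounded D₂)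
    (lam : ℝ) (hlam : 0 < lam)
    (hmom : ∀ α β : Fin n → ℕ,
      (∫ z in D₁, (∏ j, z j ^ α j) * (starRingEnd ℂ) (∏ j, z j ^ β j))
        = (lam : ℂ) * ∫ z in D₂, (∏ j, z j ^ α j) * (starRingEnd ℂ) (∏ j, z j ^ β j)) :
    lam = 1 ∧ volume ((D₁ \ D₂) ∪ (D₂ \ D₁)) = 0 := by
  classical
  have hKc : IsCompact (closure (D₁ ∪ D₂)) := (hb₁.union hb₂).isCompact_closure
  have hKm : MeasurableSet (closure (D₁ ∪ D₂)) := isClosed_closure.measurableSet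
  have hD₁K : D₁ ⊆ closure (D₁ ∪ D₂) := (Set.subset_union_left).trans subset_closure
  have hD₂K : D₂ ⊆ closure (D₁ ∪ D₂) := (Set.subset_union_right).trans subset_closure
  haveI : CompactSpace (closure (D₁ ∪ D₂)) := isCompact_iff_compactSpace.mp hKc
  haveI hf₁ : IsFiniteMeasure (volume.restrict D₁) :=
    ⟨by rw [Measure.restrict_apply_univ]; exact hb₁.measure_lt_top⟩
  haveI hf₂ : IsFiniteMeasure (volume.restrict D₂) :=
    ⟨by rw [Measure.restrict_apply_univ]; exact hb₂.measure_lt_top⟩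
  haveI hfc₁ : IsFiniteMeasure ((volume.restrict D₁).comap
      (Subtype.val : closure (D₁ ∪ D₂) → (Fin n → ℂ))) := by
    constructor
    rw [(MeasurableEmbedding.subtype_coe hKm).comap_apply]
    exact measure_lt_top _ _
  haveI hfc₂ : IsFiniteMeasure ((volume.restrict D₂).comap
      (Subtype.val : closure (D₁ ∪ D₂) → (Fin n → ℂ))) := by
    constructor
    rw [(MeasurableEmbedding.subtype_coe hKm).comap_apply]
    exact measure_lt_top _ _
  have key₁ : ∀ f : (Fin n → ℂ) → ℂ,
      ∫ w : closure (D₁ ∪ D₂), f w ∂((volume.restrict D₁).comap Subtype.val)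
        = ∫ z in D₁, f z := by
    intro f
    rw [integral_subtype_comap hKm f, Measure.restrict_restrict hKm,
      Set.inter_eq_self_of_subset_right hD₁K]
  have key₂ : ∀ f : (Fin n → ℂ) → ℂ,
      ∫ w : closure (D₁ ∪ D₂), f w ∂((volume.restrict D₂).comap Subtype.val)
        = ∫ z in D₂, f z := by
    intro f
    rw [integral_subtype_comap hKm f, Measure.restrict_restrict hKm,
      Set.inter_eq_self_of_subset_right hD₂K]
  have hall : ∀ g : C(closure (D₁ ∪ D₂), ℂ),
      ∫ w, g w ∂((volume.restrict D₁).comap Subtype.val)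
        = (lam : ℂ) * ∫ w, g w ∂((volume.restrict D₂).comap Subtype.val) := by
    refine integral_eq_of_moments _ _ lam ?_
    intro α β
    rw [key₁ (fun z => (∏ j, z j ^ α j) * (starRingEnd ℂ) (∏ j, z j ^ β j)),
      key₂ (fun z => (∏ j, z j ^ α j) * (starRingEnd ℂ) (∏ j, z j ^ β j))]
    exact hmom α β
  -- measure equality
  have hmeas : volume.restrict D₁ = (ENNReal.ofReal lam) • volume.restrict D₂ := by
    refine ext_of_forall_lintegral_eq_of_IsFiniteMeasure ?_
    intro f
    set r : (Fin n → ℂ) → ℝ := fun z => ((f z : NNReal) : ℝ) with hr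
    have hcont : Continuous fun w : closure (D₁ ∪ D₂) => ((r (w : Fin n → ℂ) : ℝ) : ℂ) :=
      Complex.continuous_ofReal.comp
        (NNReal.continuous_coe.comp (f.continuous.comp continuous_subtype_val))
    have h := hall ⟨fun w => ((r (w : Fin n → ℂ) : ℝ) : ℂ), hcont⟩
    simp only [ContinuousMap.coe_mk] at h
    rw [key₁ (fun z => ((r z : ℝ) : ℂ)), key₂ (fun z => ((r z : ℝ) : ℂ))] at h
    have hA : (∫ z in D₁, ((r z : ℝ) : ℂ)) = Complex.ofReal (∫ z in D₁, r z) :=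
      integral_ofReal (f := r)
    have hB : (∫ z in D₂, ((r z : ℝ) : ℂ)) = Complex.ofReal (∫ z in D₂, r z) :=
      integral_ofReal (f := r)
    rw [hA, hB] at h
    have hre : (∫ z in D₁, r z) = lam * ∫ z in D₂, r z := by exact_mod_cast h
    have hint₁ : Integrable r (volume.restrict D₁) :=
      BoundedContinuousFunction.integrable_of_nnreal (volume.restrict D₁) f
    have hint₂ : Integrable r (volume.restrict D₂) :=
      BoundedContinuousFunction.integrable_of_nnreal (volume.restrict D₂) f
    calc ∫⁻ x, (f x : ENNReal) ∂(volume.restrict D₁)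
        = ENNReal.ofReal (∫ z in D₁, r z) := lintegral_coe_eq_integral _ hint₁
      _ = ENNReal.ofReal (lam * ∫ z in D₂, r z) := by rw [hre]
      _ = ENNReal.ofReal lam * ENNReal.ofReal (∫ z in D₂, r z) :=
          ENNReal.ofReal_mul hlam.le
      _ = ENNReal.ofReal lam * ∫⁻ x, (f x : ENNReal) ∂(volume.restrict D₂) := by
          rw [lintegral_coe_eq_integral _ hint₂]
      _ = ∫⁻ x, (f x : ENNReal) ∂((ENNReal.ofReal lam) • volume.restrict D₂) := by
          rw [lintegral_smul_measure, smul_eq_mul]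
  -- symmetric difference
  have hd₁ : volume (D₁ \ D₂) = 0 := by
    have hs : MeasurableSet (D₁ \ D₂) := ho₁.measurableSet.diff ho₂.measurableSet
    have h1 : (volume.restrict D₁) (D₁ \ D₂) = volume (D₁ \ D₂) := by
      rw [Measure.restrict_apply hs, Set.inter_eq_self_of_subset_left Set.diff_subset]
    have h2 : (volume.restrict D₂) (D₁ \ D₂) = 0 := by
      rw [Measure.restrict_apply hs, Set.diff_inter_self, measure_empty]
    rw [← h1, hmeas, Measure.smul_apply, h2, smul_zero]
  have hd₂ : volume (D₂ \ D₁) = 0 := by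
    have hs : MeasurableSet (D₂ \ D₁) := ho₂.measurableSet.diff ho₁.measurableSet
    have h1 : (volume.restrict D₁) (D₂ \ D₁) = 0 := by
      rw [Measure.restrict_apply hs, Set.diff_inter_self, measure_empty]
    have h2 : (volume.restrict D₂) (D₂ \ D₁) = volume (D₂ \ D₁) := by
      rw [Measure.restrict_apply hs, Set.inter_eq_self_of_subset_left Set.diff_subset]
    have h := h1
    rw [hmeas, Measure.smul_apply, h2, smul_eq_mul] at h
    rcases mul_eq_zero.mp h with h' | h'
    · exact absurd h' (by simp [ENNReal.ofReal_eq_zero, not_le, hlam])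
    · exact h'
  refine ⟨?_, measure_union_null hd₁ hd₂⟩
  have hvol12 : volume D₁ = volume D₂ := by
    apply le_antisymm
    · calc volume D₁ ≤ volume (D₂ ∪ (D₁ \ D₂)) :=
            measure_mono (by intro z hz; by_cases h : z ∈ D₂ <;> simp [h, hz])
        _ ≤ volume D₂ + volume (D₁ \ D₂) := measure_union_le _ _
        _ = volume D₂ := by rw [hd₁, add_zero]
    · calc volume D₂ ≤ volume (D₁ ∪ (D₂ \ D₁)) :=
            measure_mono (by intro z hz; by_cases h : z ∈ D₁ <;> simp [h, hz])
        _ ≤ volume D₁ + volume (D₂ \ D₁) := measure_union_le _ _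
        _ = volume D₁ := by rw [hd₂, add_zero]
  have huniv : volume D₁ = (ENNReal.ofReal lam) * volume D₂ := by
    have := congrArg (fun m : Measure (Fin n → ℂ) => m Set.univ) hmeas
    simpa [Measure.restrict_apply_univ] using this
  rw [hvol12] at huniv
  have hpos : volume D₂ ≠ 0 := (ho₂.measure_pos volume h₂).ne'
  have hfin : volume D₂ ≠ ⊤ := hb₂.measure_lt_top.ne
  have ht : (volume D₂).toReal = lam * (volume D₂).toReal := by
    conv_lhs => rw [huniv]
    rw [ENNReal.toReal_mul, ENNReal.toReal_ofReal hlam.le]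
  have htpos : (volume D₂).toReal ≠ 0 := by
    simp [ENNReal.toReal_eq_zero_iff, hpos, hfin]
  have h1t : (1 : ℝ) * (volume D₂).toReal = lam * (volume D₂).toReal := by
    rw [one_mul]; exact ht
  exact (mul_right_cancel₀ htpos h1t).symm
end

section
/- Let M ⊆ ℂⁿ be a nonempty connected open set admitting a holomorphic function g : M → ℂ with g ≢ 0 and ∫_M |g|² dV_{2n} < ∞. Let E ⊆ M be closed in M and assume E is Bergman negligible, i.e., for every holomorphic f : M∖E → ℂ with ∫_{M∖E} |f|² dV_{2n} < ∞ there exists a holomorphic F : M → ℂ with F = f on M∖E and ∫_M |F|² dV_{2n} = ∫_{M∖E} |f|² dV_{2n}. Then M∖E is open, dense in M, and connected; in particular E has empty interior. -/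
open MeasureTheory Metric Filter

/-- Identity theorem in several complex variables, proved by one-variable slicing. -/
lemma aux_zero {n : ℕ} {M : Set (Fin n → ℂ)} (hM : IsOpen M)
    (hconn : IsPreconnected M) {F : (Fin n → ℂ) → ℂ} (hF : DifferentiableOn ℂ F M)
    {z₀ : Fin n → ℂ} (hz₀ : z₀ ∈ M) (h0 : ∀ᶠ z in nhds z₀, F z = 0) :
    Set.EqOn F 0 M := by
  set S : Set (Fin n → ℂ) := {x | ∀ᶠ z in nhds x, F z = 0} with hS
  have hSopen : IsOpen S := isOpen_setOf_eventually_nhds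
  have key : ∀ x ∈ M, x ∈ closure S → x ∈ S := by
    intro x hxM hxcl
    rcases Metric.isOpen_iff.1 hM x hxM with ⟨r, hr, hball⟩
    rcases Metric.mem_closure_iff.1 hxcl (r/2) (by positivity) with ⟨y, hyS, hyd⟩
    have hball2 : ∀ w ∈ ball x (r/2), F w = 0 := by
      intro w hw
      set L : ℂ → (Fin n → ℂ) := fun t => y + t • (w - y) with hL
      set V : Set ℂ := L ⁻¹' (ball x r) with hV
      have hLdiff : Differentiable ℂ L :=
        (differentiable_id.smul_const (w - y)).const_add y
      have hVopen : IsOpen V := isOpen_ball.preimage hLdiff.continuous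
      have hVconv : Convex ℝ V := by
        have hVeq : V = ((LinearMap.toSpanSingleton ℂ (Fin n → ℂ) (w - y)).restrictScalars ℝ)
            ⁻¹' (ball (x - y) r) := by
          ext t
          simp only [hV, hL, Set.mem_preimage, mem_ball, dist_eq_norm,
            LinearMap.restrictScalars_apply, LinearMap.toSpanSingleton_apply]
          constructor <;> intro h <;>
            [ (convert h using 2; abel); (convert h using 2; abel) ]
        rw [hVeq]
        exact (convex_ball (x - y) r).linear_preimage _
      have hmaps : Set.MapsTo L V M := fun t ht => hball ht
      have hh : DifferentiableOn ℂ (F ∘ L) V :=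
        hF.comp hLdiff.differentiableOn hmaps
      have hL0 : L 0 = y := by simp [hL]
      have h0V : (0 : ℂ) ∈ V := by
        simp only [hV, Set.mem_preimage, hL0, mem_ball]
        rw [dist_comm]
        linarith
      have h1V : (1 : ℂ) ∈ V := by
        have : L 1 = w := by simp [hL]
        simp only [hV, Set.mem_preimage, this]
        exact ball_subset_ball (by linarith) hw
      have hT : Filter.Tendsto L (nhds 0) (nhds y) := by
        have := hLdiff.continuous.tendsto 0
        rwa [hL0] at this
      have h0' : (F ∘ L) =ᶠ[nhds (0:ℂ)] 0 := hT.eventually hyS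
      have := ((hh.analyticOnNhd hVopen).eqOn_zero_of_preconnected_of_eventuallyEq_zero
        hVconv.isPreconnected h0V h0') h1V
      simpa [hL] using this
    exact Filter.eventually_of_mem (Metric.ball_mem_nhds x (by positivity)) hball2
  have hMcover : M ⊆ S ∪ (closure S)ᶜ := by
    intro x hx
    by_cases h : x ∈ closure S
    · exact Or.inl (key x hx h)
    · exact Or.inr h
  have hMS : (M ∩ S).Nonempty := ⟨z₀, hz₀, h0⟩
  have hempty : M ∩ (closure S)ᶜ = ∅ := by
    by_contra h
    rcases hconn S (closure S)ᶜ hSopen isClosed_closure.isOpen_compl hMcover hMS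
      (Set.nonempty_iff_ne_empty.2 h) with ⟨z, hzM, hzS, hzc⟩
    exact hzc (subset_closure hzS)
  intro x hx
  have hxS : x ∈ S := by
    rcases hMcover hx with h | h
    · exact h
    · exact absurd (Set.mem_inter hx h) (by simp [hempty])
  exact hxS.self_of_nhds

open MeasureTheory

/-- Let `M ⊆ ℂⁿ` be a nonempty connected open set with a nontrivial
square-integrable holomorphic function, and let `E ⊊ M` be relatively closed in `M` and
Bergman negligible (every square-integrable holomorphic function on `M∖E` extends
holomorphically to `M` with the same `L²` norm). Then `M∖E` is open, dense in `M`, and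
connected; in particular `E` has empty interior. -/
theorem stmt15 (n : ℕ) (hn : 0 < n) (M E : Set (Fin n → ℂ))
    (hM : IsOpen M) (hMne : M.Nonempty) (hMconn : IsConnected M)
    (g : (Fin n → ℂ) → ℂ) (hg : DifferentiableOn ℂ g M)
    (hgne : ∃ z ∈ M, g z ≠ 0)
    (hgL2 : (∫⁻ z in M, ENNReal.ofReal (‖g z‖ ^ 2)) < ⊤)
    (hEM : E ⊆ M) (hEproper : E ≠ M)
    (hEclosed : ∀ x ∈ M, x ∈ closure E → x ∈ E)
    (hneglig : ∀ f : (Fin n → ℂ) → ℂ, DifferentiableOn ℂ f (M \ E) →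
      (∫⁻ z in M \ E, ENNReal.ofReal (‖f z‖ ^ 2)) < ⊤ →
      ∃ F : (Fin n → ℂ) → ℂ, DifferentiableOn ℂ F M ∧ (∀ z ∈ M \ E, F z = f z) ∧
        (∫⁻ z in M, ENNReal.ofReal (‖F z‖ ^ 2))
          = ∫⁻ z in M \ E, ENNReal.ofReal (‖f z‖ ^ 2)) :
    IsOpen (M \ E) ∧ M ⊆ closure (M \ E) ∧ IsConnected (M \ E) ∧ interior E = ∅ := by
  have hpre := hMconn.isPreconnected
  have hUsub : M \ E ⊆ M := Set.diff_subset
  have hUopen : IsOpen (M \ E) := by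
    have hrw : M \ E = M ∩ (closure E)ᶜ := by
      ext x
      constructor
      · rintro ⟨hxM, hxE⟩
        exact ⟨hxM, fun hc => hxE (hEclosed x hxM hc)⟩
      · rintro ⟨hxM, hxc⟩
        exact ⟨hxM, fun hc => hxc (subset_closure hc)⟩
    rw [hrw]
    exact hM.inter isClosed_closure.isOpen_compl
  have hUne : (M \ E).Nonempty := by
    rcases Set.exists_of_ssubset (ssubset_of_subset_of_ne hEM hEproper) with ⟨x, hxM, hxE⟩
    exact ⟨x, hxM, hxE⟩
  -- interior E = ∅
  have hEint : interior E = ∅ := by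
    by_contra hne
    obtain ⟨x₀, hx₀⟩ := Set.nonempty_iff_ne_empty.2 hne
    obtain ⟨F, hFdiff, hFeq, hFint⟩ := hneglig g (hg.mono Set.diff_subset)
      (lt_of_le_of_lt (lintegral_mono_set Set.diff_subset) hgL2)
    obtain ⟨z1, hz1⟩ := hUne
    have ev : ∀ᶠ z in nhds z1, F z - g z = 0 :=
      Filter.eventually_of_mem (hUopen.mem_nhds hz1)
        (fun z hz => by rw [hFeq z hz, sub_self])
    have hFg := aux_zero hM hpre (hFdiff.sub hg) (hUsub hz1) ev
    have hFgM : ∀ z ∈ M, F z = g z := fun z hz => by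
      have := hFg hz
      simpa [sub_eq_zero] using this
    have hEmeas : MeasurableSet E := by
      have h : E = M \ (M \ E) := (Set.diff_diff_cancel_left hEM).symm
      rw [h]
      exact hM.measurableSet.diff hUopen.measurableSet
    have hsplit : (∫⁻ z in M, ENNReal.ofReal (‖g z‖ ^ 2))
        = (∫⁻ z in M \ E, ENNReal.ofReal (‖g z‖ ^ 2))
          + ∫⁻ z in E, ENNReal.ofReal (‖g z‖ ^ 2) := by
      rw [← lintegral_union hEmeas Set.disjoint_sdiff_left, Set.diff_union_of_subset hEM]
    have hcongr : (∫⁻ z in M, ENNReal.ofReal (‖F z‖ ^ 2))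
        = ∫⁻ z in M, ENNReal.ofReal (‖g z‖ ^ 2) :=
      setLIntegral_congr_fun hM.measurableSet
        (fun z hz => by rw [hFgM z hz])
    have hUfin : (∫⁻ z in M \ E, ENNReal.ofReal (‖g z‖ ^ 2)) ≠ ⊤ :=
      (lt_of_le_of_lt (lintegral_mono_set Set.diff_subset) hgL2).ne
    have hE0 : (∫⁻ z in E, ENNReal.ofReal (‖g z‖ ^ 2)) = 0 := by
      have h1 : (∫⁻ z in M \ E, ENNReal.ofReal (‖g z‖ ^ 2))
          + (∫⁻ z in E, ENNReal.ofReal (‖g z‖ ^ 2))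
          = (∫⁻ z in M \ E, ENNReal.ofReal (‖g z‖ ^ 2)) + 0 := by
        rw [add_zero, ← hsplit, ← hcongr, hFint]
      exact (ENNReal.add_right_inj hUfin).mp h1
    -- g vanishes on interior E
    have hg0 : ∀ x ∈ interior E, g x = 0 := by
      intro x hx
      by_contra hgx
      have hxM : x ∈ M := hEM (interior_subset hx)
      have hgat : ContinuousAt g x := hg.continuousOn.continuousAt (hM.mem_nhds hxM)
      have hcont : ContinuousAt (fun z => ‖g z‖ ^ 2) x :=
        (continuous_norm.continuousAt.comp hgat).pow 2
      have hpos : 0 < ‖g x‖ ^ 2 := pow_pos (norm_pos_iff.mpr hgx) 2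
      have hev : ∀ᶠ z in nhds x, ‖g x‖ ^ 2 / 2 < ‖g z‖ ^ 2 :=
        continuousAt_const.eventually_lt hcont (by linarith)
      have hmem : {z | ‖g x‖ ^ 2 / 2 < ‖g z‖ ^ 2} ∩ interior E
          ∈ nhds x := Filter.inter_mem hev (isOpen_interior.mem_nhds hx)
      rcases Metric.mem_nhds_iff.1 hmem with ⟨δ, hδ, hsub⟩
      have hlow : ENNReal.ofReal (‖g x‖ ^ 2 / 2) * volume (Metric.ball x δ)
          ≤ ∫⁻ z in Metric.ball x δ, ENNReal.ofReal (‖g z‖ ^ 2) := by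
        rw [← setLIntegral_const (Metric.ball x δ) (ENNReal.ofReal (‖g x‖ ^ 2 / 2))]
        refine setLIntegral_mono' measurableSet_ball fun z hz => ?_
        exact ENNReal.ofReal_le_ofReal (le_of_lt (hsub hz).1)
      have hball_sub : Metric.ball x δ ⊆ E := fun z hz => interior_subset (hsub hz).2
      have hup : (∫⁻ z in Metric.ball x δ, ENNReal.ofReal (‖g z‖ ^ 2))
          ≤ ∫⁻ z in E, ENNReal.ofReal (‖g z‖ ^ 2) :=
        lintegral_mono_set hball_sub
      have hvol : 0 < volume (Metric.ball x δ) := measure_ball_pos volume x hδ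
      have : (0:ENNReal) < ENNReal.ofReal (‖g x‖ ^ 2 / 2)
          * volume (Metric.ball x δ) := by
        apply ENNReal.mul_pos
        · simp only [ne_eq, ENNReal.ofReal_eq_zero, not_le]
          linarith
        · exact hvol.ne'
      have := this.trans_le (hlow.trans hup)
      rw [hE0] at this
      exact lt_irrefl 0 this
    have ev0 : ∀ᶠ z in nhds x₀, g z = 0 :=
      Filter.eventually_of_mem (isOpen_interior.mem_nhds hx₀) hg0
    have hgall := aux_zero hM hpre hg (hEM (interior_subset hx₀)) ev0
    obtain ⟨z, hzM, hgz⟩ := hgne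
    exact hgz (hgall hzM)
  -- density
  have hdense : M ⊆ closure (M \ E) := by
    intro x hxM
    rw [_root_.mem_closure_iff]
    intro o ho hxo
    by_contra hemp
    have hsubE : o ∩ M ⊆ E := by
      rintro z ⟨hzo, hzM⟩
      by_contra hzE
      exact hemp ⟨z, hzo, hzM, hzE⟩
    have : x ∈ interior E := mem_interior.2 ⟨o ∩ M, hsubE, ho.inter hM, ⟨hxo, hxM⟩⟩
    rw [hEint] at this
    exact this
  -- connectedness
  have hUconn : IsConnected (M \ E) := by
    refine ⟨hUne, ?_⟩
    intro u v hu hv hcover ⟨z₁, hz₁U, hz₁u⟩ ⟨z₂, hz₂U, hz₂v⟩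
    by_contra hemp
    rw [Set.not_nonempty_iff_eq_empty] at hemp
    classical
    set f : (Fin n → ℂ) → ℂ := fun z => if z ∈ u then g z else 0 with hf
    have hfu : ∀ w ∈ u, f w = g w := fun w hw => by simp [hf, hw]
    have hfnu : ∀ w, w ∉ u → f w = 0 := fun w hw => by simp [hf, hw]
    have hdisj : ∀ z ∈ M \ E, z ∈ u → z ∉ v := by
      intro z hzU hzu hzv
      have : z ∈ (M \ E) ∩ (u ∩ v) := ⟨hzU, hzu, hzv⟩
      rw [hemp] at this
      exact this
    have hfd : DifferentiableOn ℂ f (M \ E) := by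
      intro z hz
      rcases hcover hz with hzu | hzv
      · have hgz : DifferentiableAt ℂ g z :=
          (hg z (hUsub hz)).differentiableAt (hM.mem_nhds (hUsub hz))
        have hev : f =ᶠ[nhds z] g :=
          Filter.eventually_of_mem (hu.mem_nhds hzu) fun w hw => hfu w hw
        exact (hgz.congr_of_eventuallyEq hev).differentiableWithinAt
      · have hznu : ∀ w ∈ (M \ E) ∩ v, f w = 0 := by
          rintro w ⟨hwU, hwv⟩
          exact hfnu w fun hwu => hdisj w hwU hwu hwv
        have hev : f =ᶠ[nhds z] (fun _ => (0:ℂ)) :=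
          Filter.eventually_of_mem ((hUopen.inter hv).mem_nhds ⟨hz, hzv⟩) hznu
        exact ((differentiableAt_const (0:ℂ)).congr_of_eventuallyEq hev).differentiableWithinAt
    have hfb : ∀ z, ENNReal.ofReal (‖f z‖ ^ 2)
        ≤ ENNReal.ofReal (‖g z‖ ^ 2) := by
      intro z
      by_cases hzu : z ∈ u
      · rw [hfu z hzu]
      · rw [hfnu z hzu]
        simp
    have hfint : (∫⁻ z in M \ E, ENNReal.ofReal (‖f z‖ ^ 2)) < ⊤ :=
      lt_of_le_of_lt (le_trans (lintegral_mono hfb) (lintegral_mono_set Set.diff_subset)) hgL2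
    obtain ⟨F, hFd, hFeq, _⟩ := hneglig f hfd hfint
    have hF0 : ∀ z ∈ (M \ E) ∩ v, F z = 0 := by
      rintro z ⟨hzU, hzv⟩
      rw [hFeq z hzU]
      exact hfnu z fun hzu => hdisj z hzU hzu hzv
    have ev2 : ∀ᶠ z in nhds z₂, F z = 0 :=
      Filter.eventually_of_mem ((hUopen.inter hv).mem_nhds ⟨hz₂U, hz₂v⟩) hF0
    have hFall := aux_zero hM hpre hFd (hUsub hz₂U) ev2
    have hg0 : ∀ z ∈ (M \ E) ∩ u, g z = 0 := by
      rintro z ⟨hzU, hzu⟩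
      have h1 : F z = g z := by rw [hFeq z hzU]; exact hfu z hzu
      have h2 : F z = 0 := hFall (hUsub hzU)
      rw [← h1, h2]
    have ev1 : ∀ᶠ z in nhds z₁, g z = 0 :=
      Filter.eventually_of_mem ((hUopen.inter hu).mem_nhds ⟨hz₁U, hz₁u⟩) hg0
    have hgall := aux_zero hM hpre hg (hUsub hz₁U) ev1
    obtain ⟨z, hzM, hgz⟩ := hgne
    exact hgz (hgall hzM)
  exact ⟨hUopen, hdense, hUconn, hEint⟩
end
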